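/- arXiv:2107.07834 — 9 statements merged into one kernel-verified Lean document; each statement's English description precedes it below -/
import Mathlib

section
/- Let N be a rooted weighted digraph with root ρ, leaf set X and non-negative arc weights. Then the function AllPaths-PD_N is submodular: for all subsets A, B ⊆ X, AllPaths-PD_N(A ∪ B) + AllPaths-PD_N(A ∩ B) ≤ AllPaths-PD_N(A) + AllPaths-PD_N(B). -/
attribute [local instance] Classical.propDecidable

/-- A rooted weighted digraph: a finite directed acyclic graph with a distinguished
root from which every vertex is reachable, and non-negative real arc weights.
The leaf set is the set of sinks. -/
structure RWDigraph (V : Type) where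
  verts : Finset V
  arcs : Finset (V × V)
  root : V
  w : V × V → ℝ
  w_nonneg : ∀ e, 0 ≤ w e
  root_mem : root ∈ verts
  arc_mem : ∀ e ∈ arcs, e.1 ∈ verts ∧ e.2 ∈ verts
  acyclic : ∀ v : V, ¬ Relation.TransGen (fun a b => (a, b) ∈ arcs) v v
  reach : ∀ v ∈ verts, Relation.ReflTransGen (fun a b => (a, b) ∈ arcs) root v

namespace RWDigraph

variable {V : Type}

/-- The arc relation of a rooted weighted digraph. -/
def Arc (N : RWDigraph V) (u v : V) : Prop := (u, v) ∈ N.arcs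

/-- The leaf set `X`: the set of sinks (vertices with no outgoing arcs). -/
def leaves (N : RWDigraph V) : Set V := {v | v ∈ N.verts ∧ ∀ u, ¬ N.Arc v u}

/-- `Anc S`: the set of arcs `(u,v)` such that some leaf in `S` is reachable from `v`
by a directed path. -/
def anc (N : RWDigraph V) (S : Set V) : Set (V × V) :=
  {e | N.Arc e.1 e.2 ∧ ∃ ℓ ∈ S, Relation.ReflTransGen N.Arc e.2 ℓ}

/-- `AllPaths-PD_N(S) = ∑_{e ∈ Anc(S)} w(e)`. -/
noncomputable def allPathsPD (N : RWDigraph V) (S : Set V) : ℝ :=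
  ∑ e ∈ N.arcs.filter (fun e => e ∈ N.anc S), N.w e

end RWDigraph

/-- `AllPaths-PD_N` is submodular on subsets of the leaf set. -/
theorem allPathsPD_submodular {V : Type} (N : RWDigraph V) (A B : Set V)
    (hA : A ⊆ N.leaves) (hB : B ⊆ N.leaves) :
    N.allPathsPD (A ∪ B) + N.allPathsPD (A ∩ B) ≤ N.allPathsPD A + N.allPathsPD B := by
  classical
  have key : ∀ S : Set V, N.allPathsPD S =
      ∑ e ∈ N.arcs, if e ∈ N.anc S then N.w e else 0 := by
    intro S
    rw [RWDigraph.allPathsPD, Finset.sum_filter]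
  rw [key, key, key, key, ← Finset.sum_add_distrib, ← Finset.sum_add_distrib]
  apply Finset.sum_le_sum
  intro e _
  have hw := N.w_nonneg e
  by_cases hab : e ∈ N.anc (A ∩ B)
  · -- then e ∈ anc A and e ∈ anc B
    obtain ⟨harc, ℓ, hℓ, hr⟩ := id hab
    have hA' : e ∈ N.anc A := ⟨harc, ℓ, hℓ.1, hr⟩
    have hB' : e ∈ N.anc B := ⟨harc, ℓ, hℓ.2, hr⟩
    have hU : e ∈ N.anc (A ∪ B) := ⟨harc, ℓ, Or.inl hℓ.1, hr⟩
    simp [hA', hB', hU, hab, le_refl]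
  · by_cases hu : e ∈ N.anc (A ∪ B)
    · obtain ⟨harc, ℓ, hℓ, hr⟩ := hu
      have : e ∈ N.anc A ∨ e ∈ N.anc B := by
        rcases hℓ with h | h
        · exact Or.inl ⟨harc, ℓ, h, hr⟩
        · exact Or.inr ⟨harc, ℓ, h, hr⟩
      have hu' : e ∈ N.anc (A ∪ B) := ⟨harc, ℓ, hℓ, hr⟩
      rcases this with h | h <;> simp [h, hab, hu'] <;>
        [skip; skip] <;> positivity
    · simp [hab, hu]
      positivity
end

section
/- Let N be a rooted weighted digraph with root ρ, leaf set X and non-negative arc weights, and let ℓ, ℓ' ∈ X be leaves such that every arc e with w(e) > 0 that belongs to Anc({ℓ}) also belongs to Anc({ℓ'}). Then for every subset S ⊆ X with ℓ ∈ S, AllPaths-PD_N((S \ {ℓ}) ∪ {ℓ'}) ≥ AllPaths-PD_N(S). -/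
attribute [local instance] Classical.propDecidable

/-- if every positive-weight arc ancestral to the leaf `ℓ` is also
ancestral to the leaf `ℓ'`, then replacing `ℓ` by `ℓ'` in any subset `S` of leaves
containing `ℓ` does not decrease the AllPaths-PD score. -/
theorem allPathsPD_exchange {V : Type} (N : RWDigraph V) (ℓ ℓ' : V)
    (hℓ : ℓ ∈ N.leaves) (hℓ' : ℓ' ∈ N.leaves)
    (h : ∀ e ∈ N.anc {ℓ}, 0 < N.w e → e ∈ N.anc {ℓ'})
    (S : Set V) (hS : S ⊆ N.leaves) (hmem : ℓ ∈ S) :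
    N.allPathsPD S ≤ N.allPathsPD ((S \ {ℓ}) ∪ {ℓ'}) := by
  unfold RWDigraph.allPathsPD
  rw [← Finset.sum_filter_ne_zero (N.arcs.filter (fun e => e ∈ N.anc S)) (f := N.w)]
  apply Finset.sum_le_sum_of_subset_of_nonneg
  · intro e he
    simp only [Finset.mem_filter] at he ⊢
    obtain ⟨⟨hea, hanc⟩, hw0⟩ := he
    refine ⟨hea, ?_⟩
    obtain ⟨harc, m, hm, hreach⟩ := hanc
    by_cases hmℓ : m = ℓ
    · subst hmℓ
      have := h e ⟨harc, m, rfl, hreach⟩ (lt_of_le_of_ne (N.w_nonneg e) (Ne.symm hw0))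
      obtain ⟨_, m', hm', hr'⟩ := this
      exact ⟨harc, m', Or.inr hm', hr'⟩
    · exact ⟨harc, m, Or.inl ⟨hm, hmℓ⟩, hreach⟩
  · intro e _ _
    exact N.w_nonneg e
end

section
/- For every finite set E and every finite family S_1, …, S_n of subsets of E, there exists a rooted weighted digraph N with root ρ, arc weights taking values in {0,1}, and leaf set consisting of n leaves v_1, …, v_n (one for each member of the family) such that for every index set I ⊆ {1, …, n}, AllPaths-PD_N({v_i : i ∈ I}) = |⋃_{i ∈ I} S_i|. -/
attribute [local instance] Classical.propDecidable

/-- for every finite set `E` and every finite family `S 0, …, S (n-1)`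
of subsets of `E`, there is a rooted weighted digraph `N` with arc weights in `{0,1}`
whose leaf set consists of `n` leaves `v 0, …, v (n-1)` such that for every index set
`I`, `AllPaths-PD_N({v i : i ∈ I}) = |⋃_{i ∈ I} S i|`. -/
theorem maximum_coverage_network {α : Type} [DecidableEq α]
    (E : Finset α) (n : ℕ) (hn : 0 < n) (S : Fin n → Finset α) (hSE : ∀ i, S i ⊆ E) :
    ∃ (V : Type) (N : RWDigraph V) (v : Fin n → V),
      Function.Injective v ∧
      N.leaves = Set.range v ∧
      (∀ e, N.w e = 0 ∨ N.w e = 1) ∧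
      ∀ I : Finset (Fin n),
        N.allPathsPD (v '' ↑I) = ((I.biUnion S).card : ℝ) := by
  classical
  set T : Finset α := Finset.univ.biUnion S with hT
  set arcs : Finset ((Option (α ⊕ Fin n)) × (Option (α ⊕ Fin n))) :=
    T.image (fun x => ((none : (Option (α ⊕ Fin n))), some (Sum.inl x))) ∪
    (Finset.univ : Finset (Fin n)).image (fun i => ((none : (Option (α ⊕ Fin n))), some (Sum.inr i))) ∪
    Finset.univ.biUnion (fun i : Fin n =>
      (S i).image (fun x => ((some (Sum.inl x) : (Option (α ⊕ Fin n))), some (Sum.inr i)))) with harcsdef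
  have harcs : ∀ p : (Option (α ⊕ Fin n)) × (Option (α ⊕ Fin n)), p ∈ arcs ↔
      (∃ x ∈ T, p = (none, some (Sum.inl x))) ∨
      (∃ i : Fin n, p = (none, some (Sum.inr i))) ∨
      (∃ i : Fin n, ∃ x ∈ S i, p = (some (Sum.inl x), some (Sum.inr i))) := by
    intro p
    simp [harcsdef, eq_comm]
  set verts : Finset (Option (α ⊕ Fin n)) :=
    {(none : (Option (α ⊕ Fin n)))} ∪ T.image (fun x => (some (Sum.inl x) : (Option (α ⊕ Fin n)))) ∪
      (Finset.univ : Finset (Fin n)).image (fun i => (some (Sum.inr i) : (Option (α ⊕ Fin n)))) with hverts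
  set rank : (Option (α ⊕ Fin n)) → ℕ := fun v => match v with
    | none => 0
    | some (Sum.inl _) => 1
    | some (Sum.inr _) => 2 with hrank
  have hrank_lt : ∀ p ∈ arcs, rank p.1 < rank p.2 := by
    intro p hp
    rcases (harcs p).1 hp with ⟨x, _, rfl⟩ | ⟨i, rfl⟩ | ⟨i, x, _, rfl⟩ <;> simp [hrank]
  have hacyc : ∀ v : (Option (α ⊕ Fin n)), ¬ Relation.TransGen (fun a b => (a, b) ∈ arcs) v v := by
    have key : ∀ a b : (Option (α ⊕ Fin n)), Relation.TransGen (fun a b => (a, b) ∈ arcs) a b → rank a < rank b := by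
      intro a b h
      induction h with
      | single h => exact hrank_lt _ h
      | tail _ h ih => exact ih.trans (hrank_lt _ h)
    intro v hv
    exact lt_irrefl _ (key v v hv)
  set N : RWDigraph (Option (α ⊕ Fin n)) :=
    { verts := verts
      arcs := arcs
      root := none
      w := fun e => if ∃ x : α, e = ((none : (Option (α ⊕ Fin n))), some (Sum.inl x)) then 1 else 0
      w_nonneg := by intro e; split <;> norm_num
      root_mem := by simp [hverts]
      arc_mem := by
        have hv0 : (none : (Option (α ⊕ Fin n))) ∈ verts := by simp [hverts]
        have hv1 : ∀ x ∈ T, (some (Sum.inl x) : (Option (α ⊕ Fin n))) ∈ verts := by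
          intro x hx
          simp only [hverts, Finset.mem_union, Finset.mem_image]
          exact Or.inl (Or.inr ⟨x, hx, rfl⟩)
        have hv2 : ∀ i : Fin n, (some (Sum.inr i) : (Option (α ⊕ Fin n))) ∈ verts := by
          intro i
          simp only [hverts, Finset.mem_union, Finset.mem_image]
          exact Or.inr ⟨i, Finset.mem_univ i, rfl⟩
        intro e he
        rcases (harcs e).1 he with ⟨x, hx, rfl⟩ | ⟨i, rfl⟩ | ⟨i, x, hx, rfl⟩
        · exact ⟨hv0, hv1 x hx⟩
        · exact ⟨hv0, hv2 i⟩
        · have hxT : x ∈ T := by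
            simp only [hT, Finset.mem_biUnion, Finset.mem_univ, true_and]
            exact ⟨i, hx⟩
          exact ⟨hv1 x hxT, hv2 i⟩
      acyclic := hacyc
      reach := by
        intro v hv
        simp only [hverts, Finset.mem_union, Finset.mem_singleton, Finset.mem_image] at hv
        rcases hv with (rfl | ⟨x, hx, rfl⟩) | ⟨i, _, rfl⟩
        · exact Relation.ReflTransGen.refl
        · exact Relation.ReflTransGen.single ((harcs _).2 (Or.inl ⟨x, hx, rfl⟩))
        · exact Relation.ReflTransGen.single ((harcs _).2 (Or.inr (Or.inl ⟨i, rfl⟩))) } with hN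
  have hArc : ∀ a b : (Option (α ⊕ Fin n)), N.Arc a b ↔ (a, b) ∈ arcs := fun a b => Iff.rfl
  -- no arcs out of leaves
  have hsink : ∀ (i : Fin n) (u : (Option (α ⊕ Fin n))), ¬ N.Arc (some (Sum.inr i)) u := by
    intro i u h
    rcases (harcs _).1 h with ⟨x, _, h⟩ | ⟨j, h⟩ | ⟨j, x, _, h⟩ <;> simp at h
  have hreach_inr : ∀ (i : Fin n) (b : (Option (α ⊕ Fin n))),
      Relation.ReflTransGen N.Arc (some (Sum.inr i)) b → b = some (Sum.inr i) := by
    intro i b h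
    rcases h.cases_head with rfl | ⟨c, hc, _⟩
    · rfl
    · exact absurd hc (hsink i c)
  have hreach_inl : ∀ (x : α) (b : (Option (α ⊕ Fin n))),
      Relation.ReflTransGen N.Arc (some (Sum.inl x)) b →
      b = some (Sum.inl x) ∨ ∃ i : Fin n, x ∈ S i ∧ b = some (Sum.inr i) := by
    intro x b h
    rcases h.cases_head with rfl | ⟨c, hc, hc2⟩
    · exact Or.inl rfl
    · rcases (harcs _).1 hc with ⟨y, _, h⟩ | ⟨j, h⟩ | ⟨j, y, hy, h⟩
      · simp at h
      · simp at h
      · simp only [Prod.mk.injEq, Option.some.injEq, Sum.inl.injEq] at h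
        obtain ⟨hxy, rfl⟩ := h
        subst hxy
        exact Or.inr ⟨j, hy, hreach_inr j b hc2⟩
  refine ⟨(Option (α ⊕ Fin n)), N, fun i => some (Sum.inr i), ?_, ?_, ?_, ?_⟩
  · intro i j h
    simpa using h
  · ext u
    constructor
    · rintro ⟨hu, hsinku⟩
      simp only [hN, hverts, Finset.mem_union, Finset.mem_singleton, Finset.mem_image] at hu
      rcases hu with (rfl | ⟨x, hx, rfl⟩) | ⟨i, _, rfl⟩
      · have i : Fin n := ⟨0, hn⟩
        exact absurd ((harcs _).2 (Or.inr (Or.inl ⟨i, rfl⟩))) (hsinku _)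
      · simp only [hT, Finset.mem_biUnion, Finset.mem_univ, true_and] at hx
        obtain ⟨i, hi⟩ := hx
        exact absurd ((harcs _).2 (Or.inr (Or.inr ⟨i, x, hi, rfl⟩))) (hsinku _)
      · exact ⟨i, rfl⟩
    · rintro ⟨i, rfl⟩
      exact ⟨by simp [hN, hverts], hsink i⟩
  · intro e
    simp only [hN]
    split <;> simp
  · intro I
    -- characterize membership in anc
    have hanc : ∀ p : (Option (α ⊕ Fin n)) × (Option (α ⊕ Fin n)), p ∈ arcs →
        (p ∈ N.anc ((fun i => (some (Sum.inr i) : (Option (α ⊕ Fin n)))) '' ↑I) ↔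
          ((∃ x, p = ((none : (Option (α ⊕ Fin n))), some (Sum.inl x)) ∧ ∃ i ∈ I, x ∈ S i) ∨
           (∃ i ∈ I, p = (none, some (Sum.inr i))) ∨
           (∃ i ∈ I, ∃ x ∈ S i, p = (some (Sum.inl x), some (Sum.inr i))))) := by
      intro p hp
      constructor
      · rintro ⟨hArcp, ℓ, hℓ, hre⟩
        simp only [Set.mem_image, Finset.mem_coe] at hℓ
        obtain ⟨i, hiI, rfl⟩ := hℓ
        rcases (harcs p).1 hp with ⟨x, hx, rfl⟩ | ⟨j, rfl⟩ | ⟨j, x, hxj, rfl⟩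
        · rcases hreach_inl x _ hre with h | ⟨k, hk, hkeq⟩
          · simp at h
          · have hki : k = i := by symm; simpa using hkeq
            exact Or.inl ⟨x, rfl, i, hiI, hki ▸ hk⟩
        · have hji : j = i := by symm; simpa using hreach_inr j _ hre
          exact Or.inr (Or.inl ⟨i, hiI, by rw [hji]⟩)
        · have hji : j = i := by symm; simpa using hreach_inr j _ hre
          exact Or.inr (Or.inr ⟨i, hiI, x, hji ▸ hxj, by rw [hji]⟩)
      · rintro (⟨x, rfl, i, hiI, hxi⟩ | ⟨i, hiI, rfl⟩ | ⟨i, hiI, x, hxS, rfl⟩)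
        · exact ⟨hp, some (Sum.inr i), ⟨i, hiI, rfl⟩,
            Relation.ReflTransGen.single ((harcs _).2 (Or.inr (Or.inr ⟨i, x, hxi, rfl⟩)))⟩
        · exact ⟨hp, some (Sum.inr i), ⟨i, hiI, rfl⟩, Relation.ReflTransGen.refl⟩
        · exact ⟨hp, some (Sum.inr i), ⟨i, hiI, rfl⟩, Relation.ReflTransGen.refl⟩
    -- compute the sum
    rw [RWDigraph.allPathsPD]
    have hw : ∀ e : (Option (α ⊕ Fin n)) × (Option (α ⊕ Fin n)), N.w e = if ∃ x : α, e = ((none : (Option (α ⊕ Fin n))), some (Sum.inl x)) then 1 else 0 :=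
      fun e => rfl
    calc (∑ e ∈ N.arcs.filter (fun e => e ∈ N.anc ((fun i => (some (Sum.inr i) : (Option (α ⊕ Fin n)))) '' ↑I)), N.w e)
        = ∑ e ∈ N.arcs.filter (fun e => e ∈ N.anc ((fun i => (some (Sum.inr i) : (Option (α ⊕ Fin n)))) '' ↑I)),
            (if ∃ x : α, e = ((none : (Option (α ⊕ Fin n))), some (Sum.inl x)) then (1:ℝ) else 0) := by
          exact Finset.sum_congr rfl fun e _ => hw e
      _ = ((N.arcs.filter (fun e => e ∈ N.anc ((fun i => (some (Sum.inr i) : (Option (α ⊕ Fin n)))) '' ↑I))).filter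
            (fun e => ∃ x : α, e = ((none : (Option (α ⊕ Fin n))), some (Sum.inl x)))).card := by
          rw [Finset.sum_boole]
      _ = ((I.biUnion S).card : ℝ) := by
          congr 1
          have himg : ((N.arcs.filter (fun e => e ∈ N.anc ((fun i => (some (Sum.inr i) : (Option (α ⊕ Fin n)))) '' ↑I))).filter
              (fun e => ∃ x : α, e = ((none : (Option (α ⊕ Fin n))), some (Sum.inl x))))
              = (I.biUnion S).image (fun x => ((none : (Option (α ⊕ Fin n))), some (Sum.inl x))) := by
            ext p
            simp only [Finset.mem_filter, Finset.mem_image, Finset.mem_biUnion]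
            constructor
            · rintro ⟨⟨hp, hpanc⟩, x, rfl⟩
              refine ⟨x, ?_, rfl⟩
              rcases (hanc _ hp).1 hpanc with ⟨y, hy, i, hiI, hyi⟩ | ⟨i, _, h⟩ | ⟨i, _, y, _, h⟩
              · have : y = x := by
                  simp only [Prod.mk.injEq, Option.some.injEq, Sum.inl.injEq] at hy
                  exact hy.2.symm
                subst this
                exact ⟨i, hiI, hyi⟩
              · simp at h
              · simp at h
            · rintro ⟨x, ⟨i, hiI, hxi⟩, rfl⟩
              have hxT : x ∈ T := by
                simp only [hT, Finset.mem_biUnion, Finset.mem_univ, true_and]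
                exact ⟨i, hxi⟩
              have hp : ((none : (Option (α ⊕ Fin n))), some (Sum.inl x)) ∈ arcs :=
                (harcs _).2 (Or.inl ⟨x, hxT, rfl⟩)
              exact ⟨⟨hp, (hanc _ hp).2 (Or.inl ⟨x, rfl, i, hiI, hxi⟩)⟩, x, rfl⟩
          rw [himg, Finset.card_image_of_injective]
          intro a b h
          simpa using h
end

section
/- Let N be a rooted weighted digraph with root ρ, leaf set X and weight function w, and let T_1 and T_2 be connecting subtrees for X in N equipped with weight functions w_1 and w_2 on the arcs of N that vanish on arcs outside T_1 and T_2, respectively. Suppose that (i) w_1(e) + w_2(e) = w(e) for every arc e of N, and (ii) for each i ∈ {1,2}, each arc e with w_i(e) > 0, and each leaf ℓ ∈ X, the arc e lies on a directed path from ρ to ℓ in N if and only if e lies on the (unique) directed path from ρ to ℓ in T_i. Then for every subset S ⊆ X, AllPaths-PD_N(S) = PD_{T_1}(S) + PD_{T_2}(S), where PD_{T_i}(S) is the sum of w_i(e) over all arcs e of T_i that lie on the path from ρ to some leaf in S. -/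
attribute [local instance] Classical.propDecidable

namespace RWDigraph

variable {V : Type}

/-- `v` is a vertex of the subgraph with arc set `T` rooted at `ρ`. -/
def inTree (T : Set (V × V)) (ρ : V) (v : V) : Prop :=
  v = ρ ∨ (∃ u, (u, v) ∈ T) ∨ (∃ u, (v, u) ∈ T)

/-- `T` is a connecting subtree for `S` in `N`: a subgraph of `N` that is an
arborescence rooted at the root of `N` whose set of sinks is exactly `S`. -/
structure IsConnectingSubtree (N : RWDigraph V) (T : Set (V × V)) (S : Set V) : Prop where
  subset : ∀ e ∈ T, e ∈ N.arcs
  unique_parent : ∀ u u' v : V, (u, v) ∈ T → (u', v) ∈ T → u = u'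
  root_no_parent : ∀ u, (u, N.root) ∉ T
  reach_root : ∀ v, inTree T N.root v →
    Relation.ReflTransGen (fun a b => (a, b) ∈ T) N.root v
  sinks : {v | inTree T N.root v ∧ ∀ u, (v, u) ∉ T} = S

/-- The total weight `∑_{e ∈ T} w(e)` of a subtree `T` of `N`. -/
noncomputable def subtreeWeight (N : RWDigraph V) (T : Set (V × V)) : ℝ :=
  ∑ e ∈ N.arcs.filter (fun e => e ∈ T), N.w e

/-- `MinWeightTree-PD_N(S)`: the minimum weight of a connecting subtree for `S` in `N`. -/
noncomputable def minWeightTreePD (N : RWDigraph V) (S : Set V) : ℝ :=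
  sInf {t : ℝ | ∃ T : Set (V × V), N.IsConnectingSubtree T S ∧ t = N.subtreeWeight T}

end RWDigraph

namespace RWDigraph

/-- `PD_{T}(S)` with weight function `wT`: the sum of `wT(e)` over all arcs `e` of the
subtree `T` that lie on the (unique) directed path in `T` from the root to some leaf
in `S`, i.e. over the arcs `e ∈ T` from whose head some leaf of `S` is `T`-reachable. -/
noncomputable def treePD {V : Type} (N : RWDigraph V) (T : Set (V × V))
    (wT : V × V → ℝ) (S : Set V) : ℝ :=
  ∑ e ∈ N.arcs.filter (fun e => e ∈ T ∧
      ∃ ℓ ∈ S, Relation.ReflTransGen (fun a b => (a, b) ∈ T) e.2 ℓ), wT e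

end RWDigraph

/-- if `T₁, T₂` are connecting subtrees for the leaf set `X` of `N`, with
non-negative weight functions `w₁, w₂` vanishing outside `T₁, T₂` respectively, such that
(i) `w₁(e) + w₂(e) = w(e)` for every arc `e` of `N`, and (ii) for each `i`, each arc `e`
with `wᵢ(e) > 0` and each leaf `ℓ`, `e` lies on a directed path from the root to `ℓ` in `N`
iff `e` lies on the unique path from the root to `ℓ` in `Tᵢ`, then for every `S ⊆ X`,
`AllPaths-PD_N(S) = PD_{T₁}(S) + PD_{T₂}(S)`. -/
theorem allPathsPD_eq_weighted_covering {V : Type} (N : RWDigraph V)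
    (T₁ T₂ : Set (V × V)) (w₁ w₂ : V × V → ℝ)
    (hT₁ : N.IsConnectingSubtree T₁ N.leaves) (hT₂ : N.IsConnectingSubtree T₂ N.leaves)
    (h₁nn : ∀ e, 0 ≤ w₁ e) (h₂nn : ∀ e, 0 ≤ w₂ e)
    (h₁van : ∀ e, e ∉ T₁ → w₁ e = 0) (h₂van : ∀ e, e ∉ T₂ → w₂ e = 0)
    (hsum : ∀ e ∈ N.arcs, w₁ e + w₂ e = N.w e)
    (hpath₁ : ∀ e ∈ N.arcs, 0 < w₁ e → ∀ ℓ ∈ N.leaves,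
      (Relation.ReflTransGen N.Arc e.2 ℓ ↔
        (e ∈ T₁ ∧ Relation.ReflTransGen (fun a b => (a, b) ∈ T₁) e.2 ℓ)))
    (hpath₂ : ∀ e ∈ N.arcs, 0 < w₂ e → ∀ ℓ ∈ N.leaves,
      (Relation.ReflTransGen N.Arc e.2 ℓ ↔
        (e ∈ T₂ ∧ Relation.ReflTransGen (fun a b => (a, b) ∈ T₂) e.2 ℓ)))
    (S : Set V) (hS : S ⊆ N.leaves) :
    N.allPathsPD S = N.treePD T₁ w₁ S + N.treePD T₂ w₂ S := by
  classical
  unfold RWDigraph.allPathsPD RWDigraph.treePD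
  rw [Finset.sum_filter, Finset.sum_filter, Finset.sum_filter, ← Finset.sum_add_distrib]
  apply Finset.sum_congr rfl
  intro e he
  have harc : N.Arc e.1 e.2 := by
    show (e.1, e.2) ∈ N.arcs
    simpa using he
  -- term lemma for a generic side
  have key : ∀ (T : Set (V × V)) (wi : V × V → ℝ),
      (∀ f, 0 ≤ wi f) →
      (∀ f ∈ N.arcs, 0 < wi f → ∀ ℓ ∈ N.leaves,
        (Relation.ReflTransGen N.Arc f.2 ℓ ↔
          (f ∈ T ∧ Relation.ReflTransGen (fun a b => (a, b) ∈ T) f.2 ℓ))) →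
      (if e ∈ N.anc S then wi e else 0) =
      (if e ∈ T ∧ ∃ ℓ ∈ S, Relation.ReflTransGen (fun a b => (a, b) ∈ T) e.2 ℓ
        then wi e else 0) := by
    intro T wi hnn hpath
    by_cases hw : 0 < wi e
    · have hiff : (e ∈ N.anc S) ↔
          (e ∈ T ∧ ∃ ℓ ∈ S, Relation.ReflTransGen (fun a b => (a, b) ∈ T) e.2 ℓ) := by
        constructor
        · rintro ⟨-, ℓ, hℓS, hreach⟩
          have := (hpath e he hw ℓ (hS hℓS)).mp hreach
          exact ⟨this.1, ℓ, hℓS, this.2⟩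
        · rintro ⟨heT, ℓ, hℓS, hreach⟩
          exact ⟨harc, ℓ, hℓS, (hpath e he hw ℓ (hS hℓS)).mpr ⟨heT, hreach⟩⟩
      simp [hiff]
    · have hz : wi e = 0 := le_antisymm (not_lt.mp hw) (hnn e)
      simp [hz]
  rw [← key T₁ w₁ h₁nn hpath₁, ← key T₂ w₂ h₂nn hpath₂]
  by_cases hP : e ∈ N.anc S
  · simp [hP, hsum e he]
  · simp [hP]
end

section
/- Let X be a finite set with |X| = 3q for a positive integer q, and let C be a family of 3-element subsets of X. Then there exists a function f : X → C with x ∈ f(x) for every x ∈ X and with image of cardinality |f(X)| ≤ q, if and only if C contains an exact cover of X. -/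
/-- if `|X| = 3q` with `q ≥ 1` and `C` is a family of `3`-element subsets
of `X`, then there is a function `f : X → C` with `x ∈ f x` for every `x ∈ X` and whose
image has cardinality at most `q`, if and only if `C` contains an exact cover of `X`. -/
theorem selector_iff_exact_cover_three {α : Type*} [DecidableEq α]
    (q : ℕ) (hq : 0 < q) (X : Finset α) (hX : X.card = 3 * q)
    (C : Finset (Finset α)) (hC : ∀ c ∈ C, c ⊆ X ∧ c.card = 3) :
    (∃ f : X → C, (∀ x : X, (x : α) ∈ (f x : Finset α)) ∧
      (Finset.univ.image f).card ≤ q) ↔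
    (∃ C'' ⊆ C, (C'' : Set (Finset α)).PairwiseDisjoint id ∧ C''.biUnion id = X) := by
  constructor
  · rintro ⟨f, hmem, hcard⟩
    -- the image of f in Finset (Finset α)
    set S : Finset (Finset α) := (Finset.univ.image f).image Subtype.val
      with hSdef
    have hScard : S.card ≤ q := le_trans (Finset.card_image_le) hcard
    have hSsubC : S ⊆ C := by
      intro c hc
      simp only [hSdef, Finset.mem_image] at hc
      obtain ⟨d, _, rfl⟩ := hc
      exact d.2
    have hXsub : X ⊆ S.biUnion id := by
      intro x hx
      refine Finset.mem_biUnion.2 ⟨(f ⟨x, hx⟩ : Finset α), ?_, hmem ⟨x, hx⟩⟩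
      simp only [hSdef, Finset.mem_image]
      exact ⟨f ⟨x, hx⟩, ⟨⟨x, hx⟩, Finset.mem_univ _, rfl⟩, rfl⟩
    have hsubX : S.biUnion id ⊆ X := by
      intro x hx
      obtain ⟨c, hc, hxc⟩ := Finset.mem_biUnion.1 hx
      exact (hC c (hSsubC hc)).1 hxc
    have hsumle : ∀ T : Finset (Finset α), T ⊆ C → (T.biUnion id).card ≤ 3 * T.card := by
      intro T hT
      calc (T.biUnion id).card ≤ ∑ c ∈ T, (id c).card := Finset.card_biUnion_le
        _ = ∑ c ∈ T, 3 := by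
            apply Finset.sum_congr rfl
            intro c hc; exact (hC c (hT hc)).2
        _ = 3 * T.card := by rw [Finset.sum_const, smul_eq_mul, mul_comm]
    have hEq : S.biUnion id = X := by
      apply Finset.Subset.antisymm hsubX
      exact hXsub
    refine ⟨S, hSsubC, ?_, hEq⟩
    -- pairwise disjoint
    intro c hc d hd hne
    by_contra hnd
    rw [Function.onFun, id, id] at hnd
    obtain ⟨x, hxc, hxd⟩ := Finset.not_disjoint_iff.1 hnd
    simp only [Finset.mem_coe] at hc hd
    -- card bound contradiction
    have hsplit : S.biUnion id = ((S.erase d).biUnion id) ∪ d := by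
      ext y
      simp only [Finset.mem_biUnion, Finset.mem_union, id]
      constructor
      · rintro ⟨e, he, hye⟩
        by_cases hed : e = d
        · right; exact hed ▸ hye
        · left; exact ⟨e, Finset.mem_erase.2 ⟨hed, he⟩, hye⟩
      · rintro (⟨e, he, hye⟩ | hyd)
        · exact ⟨e, Finset.mem_erase.1 he |>.2, hye⟩
        · exact ⟨d, hd, hyd⟩
    have hxU : x ∈ ((S.erase d).biUnion id) ∩ d := by
      refine Finset.mem_inter.2 ⟨?_, hxd⟩
      exact Finset.mem_biUnion.2 ⟨c, Finset.mem_erase.2 ⟨hne, hc⟩, hxc⟩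
    have h1 : 1 ≤ (((S.erase d).biUnion id) ∩ d).card :=
      Finset.card_pos.2 ⟨x, hxU⟩
    have hkey : (S.biUnion id).card + 1 ≤
        ((S.erase d).biUnion id).card + d.card := by
      rw [hsplit]
      have := Finset.card_union_add_card_inter ((S.erase d).biUnion id) d
      omega
    have herase : ((S.erase d).biUnion id).card ≤ 3 * (S.erase d).card :=
      hsumle _ (fun e he => hSsubC (Finset.mem_erase.1 he).2)
    have hdcard : d.card = 3 := (hC d (hSsubC hd)).2
    have hecard : (S.erase d).card = S.card - 1 := Finset.card_erase_of_mem hd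
    have hSpos : 1 ≤ S.card := Finset.card_pos.2 ⟨d, hd⟩
    have hXcard : (S.biUnion id).card = 3 * q := by rw [hEq, hX]
    omega
  · rintro ⟨C'', hsub, hdisj, hcover⟩
    have hdisj' : ∀ c ∈ C'', ∀ d ∈ C'', c ≠ d → Disjoint c d := by
      intro c hc d hd hne
      exact hdisj (Finset.mem_coe.2 hc) (Finset.mem_coe.2 hd) hne
    have hsum : ∑ c ∈ C'', c.card = 3 * q := by
      rw [← hX, ← hcover]
      exact (Finset.card_biUnion hdisj').symm
    have hsum3 : ∑ c ∈ C'', c.card = 3 * C''.card := by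
      rw [Finset.sum_congr rfl (fun c hc => (hC c (hsub hc)).2),
        Finset.sum_const, smul_eq_mul, mul_comm]
    have hCcard : C''.card = q := by omega
    have hex : ∀ x : X, ∃ c ∈ C'', (x : α) ∈ c := by
      intro x
      have : (x : α) ∈ C''.biUnion id := hcover ▸ x.2
      obtain ⟨c, hc, hxc⟩ := Finset.mem_biUnion.1 this
      exact ⟨c, hc, hxc⟩
    choose g hg1 hg2 using hex
    refine ⟨fun x => ⟨g x, hsub (hg1 x)⟩, fun x => hg2 x, ?_⟩
    calc (Finset.univ.image fun x => (⟨g x, hsub (hg1 x)⟩ : C)).card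
        ≤ C''.card := by
          apply Finset.card_le_card_of_injOn (Subtype.val : C → Finset α)
          · intro c hc
            simp only [Finset.mem_coe, Finset.mem_image] at hc
            obtain ⟨x, _, rfl⟩ := hc
            exact hg1 x
          · intro a _ b _ hab
            exact Subtype.ext hab
      _ = q := hCcard
end

section
/- Let N be a tree-child rooted binary phylogenetic network on X with non-negative arc weights w. Then every connecting subtree T for X in N contains every tree arc of N and, for each reticulation v of N, exactly one of the two reticulation arcs directed into v. -/
attribute [local instance] Classical.propDecidable

/-- A rooted binary phylogenetic network: a finite rooted DAG (without parallel arcs)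
in which every vertex is reachable from the root, the root has in-degree 0 and
out-degree 2, every sink (leaf) has in-degree 1, and every other non-root vertex is
either a tree vertex (in-degree 1, out-degree 2) or a reticulation (in-degree 2,
out-degree 1); each arc carries a non-negative real weight. -/
structure PhyloNetwork (V : Type) where
  verts : Finset V
  arcs : Finset (V × V)
  root : V
  w : V × V → ℝ
  w_nonneg : ∀ e, 0 ≤ w e
  root_mem : root ∈ verts
  arc_mem : ∀ e ∈ arcs, e.1 ∈ verts ∧ e.2 ∈ verts
  acyclic : ∀ v : V, ¬ Relation.TransGen (fun a b => (a, b) ∈ arcs) v v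
  reach : ∀ v ∈ verts, Relation.ReflTransGen (fun a b => (a, b) ∈ arcs) root v
  root_indeg : ∀ u : V, (u, root) ∉ arcs
  root_outdeg : {u : V | (root, u) ∈ arcs}.ncard = 2
  leaf_indeg : ∀ v ∈ verts, (∀ u, (v, u) ∉ arcs) → {u : V | (u, v) ∈ arcs}.ncard = 1
  internal_deg : ∀ v ∈ verts, v ≠ root → (∃ u, (v, u) ∈ arcs) →
    ({u : V | (u, v) ∈ arcs}.ncard = 1 ∧ {u : V | (v, u) ∈ arcs}.ncard = 2) ∨
    ({u : V | (u, v) ∈ arcs}.ncard = 2 ∧ {u : V | (v, u) ∈ arcs}.ncard = 1)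

namespace PhyloNetwork

variable {V : Type}

/-- A reticulation: a vertex of in-degree two. -/
def isRet (N : PhyloNetwork V) (v : V) : Prop := {u : V | (u, v) ∈ N.arcs}.ncard = 2

/-- The leaf set `X` of the network: its sinks. -/
def leaves (N : PhyloNetwork V) : Set V := {v | v ∈ N.verts ∧ ∀ u, (v, u) ∉ N.arcs}

/-- A tree arc: an arc whose head is not a reticulation. -/
def isTreeArc (N : PhyloNetwork V) (e : V × V) : Prop := e ∈ N.arcs ∧ ¬ N.isRet e.2

/-- Tree-child: every non-leaf vertex has a child that is a tree vertex or a leaf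
(i.e. a child that is not a reticulation). -/
def TreeChild (N : PhyloNetwork V) : Prop :=
  ∀ v ∈ N.verts, (∃ u, (v, u) ∈ N.arcs) → ∃ u, (v, u) ∈ N.arcs ∧ ¬ N.isRet u

/-- `v` is a vertex of the subgraph with arc set `T` rooted at `ρ`. -/
def inTree (T : Set (V × V)) (ρ : V) (v : V) : Prop :=
  v = ρ ∨ (∃ u, (u, v) ∈ T) ∨ (∃ u, (v, u) ∈ T)

/-- `T` is a connecting subtree for `S` in `N`: a subgraph of `N` that is an
arborescence rooted at the root of `N` whose set of sinks is exactly `S`. -/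
structure IsConnectingSubtree (N : PhyloNetwork V) (T : Set (V × V)) (S : Set V) : Prop where
  subset : ∀ e ∈ T, e ∈ N.arcs
  unique_parent : ∀ u u' v : V, (u, v) ∈ T → (u', v) ∈ T → u = u'
  root_no_parent : ∀ u, (u, N.root) ∉ T
  reach_root : ∀ v, inTree T N.root v →
    Relation.ReflTransGen (fun a b => (a, b) ∈ T) N.root v
  sinks : {v | inTree T N.root v ∧ ∀ u, (v, u) ∉ T} = S

/-- The total weight `∑_{e ∈ T} w(e)` of a subtree `T` of `N`. -/
noncomputable def subtreeWeight (N : PhyloNetwork V) (T : Set (V × V)) : ℝ :=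
  ∑ e ∈ N.arcs.filter (fun e => e ∈ T), N.w e

end PhyloNetwork

/-- in a tree-child rooted binary phylogenetic network `N`, every
connecting subtree `T` for the full leaf set `X` contains every tree arc of `N` and,
for each reticulation `v`, exactly one of the two reticulation arcs directed into `v`. -/
theorem treechild_connecting_subtree {V : Type} (N : PhyloNetwork V)
    (hTC : N.TreeChild) (T : Set (V × V)) (hT : N.IsConnectingSubtree T N.leaves) :
    (∀ e, N.isTreeArc e → e ∈ T) ∧
    (∀ v : V, N.isRet v → ∃! u : V, (u, v) ∈ T) := by
  classical
  set r : V → V → Prop := fun a b => (a, b) ∈ N.arcs with hr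
  -- parent uniqueness in N for non-reticulation heads
  have hparents : ∀ u v : V, (u, v) ∈ N.arcs → ¬ N.isRet v →
      ∀ p, (p, v) ∈ N.arcs → p = u := by
    intro u v huv hret p hpv
    have hv : v ∈ N.verts := (N.arc_mem _ huv).2
    have hvroot : v ≠ N.root := by
      intro h; exact N.root_indeg u (h ▸ huv)
    have h1 : {x : V | (x, v) ∈ N.arcs}.ncard = 1 := by
      by_cases hleaf : ∀ x, (v, x) ∉ N.arcs
      · exact N.leaf_indeg v hv hleaf
      · push_neg at hleaf
        rcases N.internal_deg v hv hvroot hleaf with ⟨h, _⟩ | ⟨h, _⟩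
        · exact h
        · exact absurd h hret
    obtain ⟨a, ha⟩ := Set.ncard_eq_one.mp h1
    have h2 : u ∈ {x : V | (x, v) ∈ N.arcs} := huv
    have hp : p ∈ {x : V | (x, v) ∈ N.arcs} := hpv
    rw [ha] at h2 hp
    simp only [Set.mem_singleton_iff] at h2 hp
    rw [h2, hp]
  have hasParent : ∀ v, PhyloNetwork.inTree T N.root v → v ≠ N.root →
      ∃ p, (p, v) ∈ T := by
    intro v hv hvr
    have h := hT.reach_root v hv
    rcases Relation.ReflTransGen.cases_tail h with h' | ⟨c, _, hc⟩
    · exact absurd h' hvr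
    · exact ⟨c, hc⟩
  have hfin : ∀ v : V, {u | Relation.TransGen r v u}.Finite := by
    intro v
    apply Set.Finite.subset (N.arcs.finite_toSet.image Prod.snd)
    intro x hx
    rcases Relation.TransGen.tail'_iff.mp hx with ⟨c, _, hcx⟩
    exact ⟨(c, x), hcx, rfl⟩
  have hlt : ∀ v u : V, (v, u) ∈ N.arcs →
      {x | Relation.TransGen r u x}.ncard < {x | Relation.TransGen r v x}.ncard := by
    intro v u hvu
    refine Set.ncard_lt_ncard ⟨?_, ?_⟩ (hfin v)
    · intro x hx; exact Relation.TransGen.head hvu hx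
    · intro hsub
      have hu : u ∈ {x | Relation.TransGen r v x} := Relation.TransGen.single hvu
      exact N.acyclic u (hsub hu)
  have key : ∀ n : ℕ, ∀ v ∈ N.verts, {x | Relation.TransGen r v x}.ncard ≤ n →
      PhyloNetwork.inTree T N.root v := by
    intro n
    induction n with
    | zero =>
      intro v hv hn
      by_cases hleaf : ∀ u, (v, u) ∉ N.arcs
      · have hm : v ∈ N.leaves := ⟨hv, hleaf⟩
        rw [← hT.sinks] at hm
        exact hm.1
      · push_neg at hleaf
        obtain ⟨u, hu⟩ := hleaf
        have h := hlt v u hu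
        omega
    | succ n ih =>
      intro v hv hn
      by_cases hleaf : ∀ u, (v, u) ∉ N.arcs
      · have hm : v ∈ N.leaves := ⟨hv, hleaf⟩
        rw [← hT.sinks] at hm
        exact hm.1
      · push_neg at hleaf
        obtain ⟨u, hu, hret⟩ := hTC v hv hleaf
        have huV : u ∈ N.verts := (N.arc_mem _ hu).2
        have hucard := hlt v u hu
        have huT : PhyloNetwork.inTree T N.root u := ih u huV (by omega)
        have huroot : u ≠ N.root := fun h => N.root_indeg v (h ▸ hu)
        obtain ⟨p, hp⟩ := hasParent u huT huroot
        have hpv : p = v := hparents v u hu hret p (hT.subset _ hp)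
        exact Or.inr (Or.inr ⟨u, hpv ▸ hp⟩)
  have allIn : ∀ v ∈ N.verts, PhyloNetwork.inTree T N.root v :=
    fun v hv => key _ v hv le_rfl
  constructor
  · rintro ⟨u, v⟩ ⟨he, hret⟩
    have hvV := (N.arc_mem _ he).2
    have hvroot : v ≠ N.root := fun h => N.root_indeg u (h ▸ he)
    obtain ⟨p, hp⟩ := hasParent v (allIn v hvV) hvroot
    have hpu : p = u := hparents u v he hret p (hT.subset _ hp)
    exact hpu ▸ hp
  · intro v hret
    have hret' : {u : V | (u, v) ∈ N.arcs}.ncard = 2 := hret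
    have hne : {u : V | (u, v) ∈ N.arcs}.Nonempty := by
      apply Set.nonempty_of_ncard_ne_zero
      rw [hret']; omega
    obtain ⟨u, hu⟩ := hne
    have hvV := (N.arc_mem _ hu).2
    have hvroot : v ≠ N.root := fun h => N.root_indeg u (h ▸ hu)
    obtain ⟨p, hp⟩ := hasParent v (allIn v hvV) hvroot
    exact ⟨p, hp, fun q hq => hT.unique_parent q p v hq hp⟩
end

section
/- Let N be a tree-child rooted binary phylogenetic network on X with non-negative arc weights w. Then the minimum, over all connecting subtrees T for X in N, of ∑_{e ∈ T} w(e) exists and equals the sum of w(e) over all tree arcs e of N, plus the sum over all reticulations v of N of the minimum of the weights of the two reticulation arcs directed into v. -/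
attribute [local instance] Classical.propDecidable

-- ############ auxiliary lemmas ############
namespace PhyloNetwork

variable {V : Type} (N : PhyloNetwork V)

lemma inSet_finite (v : V) : {u : V | (u, v) ∈ N.arcs}.Finite :=
  Set.Finite.subset (N.arcs.image Prod.fst).finite_toSet
    (fun u hu => Finset.mem_coe.mpr (Finset.mem_image.mpr ⟨(u, v), hu, rfl⟩))

lemma not_ret_root : ¬ N.isRet N.root := by
  intro h
  have he : {u : V | (u, N.root) ∈ N.arcs} = ∅ :=
    Set.eq_empty_iff_forall_notMem.mpr N.root_indeg
  rw [isRet, he] at h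
  simp at h

lemma indeg_unique {v : V} (hv : ¬ N.isRet v) {u u' : V}
    (h1 : (u, v) ∈ N.arcs) (h2 : (u', v) ∈ N.arcs) : u = u' := by
  have hvv : v ∈ N.verts := (N.arc_mem _ h1).2
  have hvr : v ≠ N.root := by rintro rfl; exact N.root_indeg u h1
  have hcard : {u : V | (u, v) ∈ N.arcs}.ncard = 1 := by
    by_cases hout : ∃ x, (v, x) ∈ N.arcs
    · rcases N.internal_deg v hvv hvr hout with ⟨h, _⟩ | ⟨h, _⟩
      · exact h
      · exact absurd h hv
    · exact N.leaf_indeg v hvv (by push_neg at hout; exact hout)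
  obtain ⟨a, ha⟩ := Set.ncard_eq_one.mp hcard
  have e1 : u ∈ {x : V | (x, v) ∈ N.arcs} := h1
  have e2 : u' ∈ {x : V | (x, v) ∈ N.arcs} := h2
  rw [ha] at e1 e2
  simp only [Set.mem_singleton_iff] at e1 e2
  rw [e1, e2]

lemma parent_exists {v : V} (hv : v ∈ N.verts) (hvr : v ≠ N.root) :
    ∃ u, (u, v) ∈ N.arcs := by
  rcases (N.reach v hv).cases_tail with h | ⟨c, _, hc⟩
  · exact absurd h hvr
  · exact ⟨c, hc⟩

def below (v : V) : Set V := {u | Relation.TransGen (fun a b => (a, b) ∈ N.arcs) v u}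
def above (v : V) : Set V := {u | Relation.TransGen (fun a b => (a, b) ∈ N.arcs) u v}

lemma below_finite (v : V) : (N.below v).Finite := by
  apply Set.Finite.subset (N.arcs.image Prod.snd).finite_toSet
  intro x hx
  induction hx with
  | single h => exact Finset.mem_coe.mpr (Finset.mem_image.mpr ⟨_, h, rfl⟩)
  | tail h' h => exact Finset.mem_coe.mpr (Finset.mem_image.mpr ⟨_, h, rfl⟩)

lemma above_finite (v : V) : (N.above v).Finite := by
  apply Set.Finite.subset (N.arcs.image Prod.fst).finite_toSet
  intro x hx
  induction hx with
  | single h => exact Finset.mem_coe.mpr (Finset.mem_image.mpr ⟨_, h, rfl⟩)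
  | tail h' h ih => exact ih

lemma below_lt {v u : V} (h : (v, u) ∈ N.arcs) :
    (N.below u).ncard < (N.below v).ncard := by
  apply Set.ncard_lt_ncard _ (N.below_finite v)
  constructor
  · intro x hx; exact Relation.TransGen.head h hx
  · intro hsub
    exact N.acyclic u (hsub (Relation.TransGen.single h))

lemma above_lt {u v : V} (h : (u, v) ∈ N.arcs) :
    (N.above u).ncard < (N.above v).ncard := by
  apply Set.ncard_lt_ncard _ (N.above_finite v)
  constructor
  · intro x hx; exact Relation.TransGen.tail hx h
  · intro hsub
    exact N.acyclic u (hsub (Relation.TransGen.single h))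

/-- The set of weights of arcs into `v`. -/
def inWeights (v : V) : Set ℝ := {t : ℝ | ∃ u : V, (u, v) ∈ N.arcs ∧ t = N.w (u, v)}

lemma inWeights_finite (v : V) : (N.inWeights v).Finite := by
  have : N.inWeights v = (fun u => N.w (u, v)) '' {u | (u, v) ∈ N.arcs} := by
    ext t; constructor
    · rintro ⟨u, hu, rfl⟩; exact ⟨u, hu, rfl⟩
    · rintro ⟨u, hu, rfl⟩; exact ⟨u, hu, rfl⟩
  rw [this]
  exact (N.inSet_finite v).image _

lemma ret_inSet_nonempty {v : V} (h : N.isRet v) :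
    {u : V | (u, v) ∈ N.arcs}.Nonempty := by
  rw [Set.nonempty_iff_ne_empty]
  intro he
  rw [isRet, he] at h
  simp at h

lemma sInf_inWeights_mem {v : V} (h : N.isRet v) :
    ∃ u : V, (u, v) ∈ N.arcs ∧ N.w (u, v) = sInf (N.inWeights v) := by
  obtain ⟨u0, hu0⟩ := N.ret_inSet_nonempty h
  have hne : (N.inWeights v).Nonempty := ⟨N.w (u0, v), u0, hu0, rfl⟩
  obtain ⟨u, hu, hw⟩ := hne.csInf_mem (N.inWeights_finite v)
  exact ⟨u, hu, hw.symm⟩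

lemma csInf_inWeights_le {v u : V} (h : (u, v) ∈ N.arcs) :
    sInf (N.inWeights v) ≤ N.w (u, v) :=
  csInf_le (N.inWeights_finite v).bddBelow ⟨u, h, rfl⟩

section Subtree

variable {N} {T : Set (V × V)} (hT : N.IsConnectingSubtree T N.leaves) (hTC : N.TreeChild)
include hT hTC

lemma inTree_of_mem : ∀ v ∈ N.verts, inTree T N.root v := by
  have key : ∀ n : ℕ, ∀ v ∈ N.verts, (N.below v).ncard = n → inTree T N.root v := by
    intro n
    induction n using Nat.strong_induction_on with
    | _ n ih =>
      intro v hv hn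
      by_cases hleaf : ∀ u, (v, u) ∉ N.arcs
      · have hvl : v ∈ N.leaves := ⟨hv, hleaf⟩
        rw [← hT.sinks] at hvl
        exact hvl.1
      · push_neg at hleaf
        obtain ⟨u, hu, hur⟩ := hTC v hv hleaf
        have huv : u ∈ N.verts := (N.arc_mem _ hu).2
        have hin : inTree T N.root u := ih _ (hn ▸ N.below_lt hu) u huv rfl
        have hune : u ≠ N.root := by rintro rfl; exact N.root_indeg v hu
        rcases (hT.reach_root u hin).cases_tail with h | ⟨c, _, hc⟩
        · exact absurd h hune
        · have hcv : c = v := N.indeg_unique hur (hT.subset _ hc) hu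
          exact Or.inr (Or.inr ⟨u, hcv ▸ hc⟩)
  intro v hv; exact key _ v hv rfl

lemma treeArc_mem {e : V × V} (he : N.isTreeArc e) : e ∈ T := by
  obtain ⟨u, v⟩ := e
  obtain ⟨hmem, hret⟩ := he
  have hvv := (N.arc_mem _ hmem).2
  have hvr : v ≠ N.root := by rintro rfl; exact N.root_indeg u hmem
  have hin := inTree_of_mem hT hTC v hvv
  rcases (hT.reach_root v hin).cases_tail with h | ⟨c, _, hc⟩
  · exact absurd h hvr
  · have : u = c := N.indeg_unique hret hmem (hT.subset _ hc)
    rw [this]; exact hc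

lemma ret_parent {v : V} (hret : N.isRet v) : ∃ p, (p, v) ∈ T := by
  obtain ⟨u, hu⟩ := N.ret_inSet_nonempty hret
  have hvv := (N.arc_mem _ hu).2
  have hvr : v ≠ N.root := by rintro rfl; exact N.root_indeg u hu
  have hin := inTree_of_mem hT hTC v hvv
  rcases (hT.reach_root v hin).cases_tail with h | ⟨c, _, hc⟩
  · exact absurd h hvr
  · exact ⟨c, hc⟩

end Subtree
end PhyloNetwork

attribute [local instance] Classical.propDecidable

/-- for a tree-child rooted binary phylogenetic network `N`, the minimum
of `∑_{e ∈ T} w(e)` over all connecting subtrees `T` for the leaf set `X` exists and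
equals the sum of the weights of all tree arcs of `N` plus the sum, over all
reticulations `v` of `N`, of the minimum weight of the two reticulation arcs into `v`. -/
theorem treechild_minWeight_formula {V : Type} (N : PhyloNetwork V) (hTC : N.TreeChild) :
    IsLeast {t : ℝ | ∃ T : Set (V × V), N.IsConnectingSubtree T N.leaves ∧
        t = N.subtreeWeight T}
      ((∑ e ∈ N.arcs.filter (fun e => N.isTreeArc e), N.w e) +
        ∑ v ∈ N.verts.filter (fun v => N.isRet v),
          sInf {t : ℝ | ∃ u : V, (u, v) ∈ N.arcs ∧ t = N.w (u, v)}) := by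
  constructor
  · -- membership: build the optimal subtree
    have hpick : ∀ v : V, ∃ u : V, N.isRet v →
        (u, v) ∈ N.arcs ∧ N.w (u, v) = sInf (N.inWeights v) := by
      intro v
      by_cases h : N.isRet v
      · obtain ⟨u, hu, hw⟩ := N.sInf_inWeights_mem h
        exact ⟨u, fun _ => ⟨hu, hw⟩⟩
      · exact ⟨N.root, fun hh => absurd hh h⟩
    choose pick hpick using hpick
    set T : Set (V × V) :=
      {e | N.isTreeArc e ∨ (N.isRet e.2 ∧ e.1 = pick e.2)} with hTdef
    have hTsub : ∀ e ∈ T, e ∈ N.arcs := by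
      rintro ⟨a, b⟩ (⟨h, _⟩ | ⟨hr, he⟩)
      · exact h
      · simp only at he
        rw [he]; exact (hpick b hr).1
    have hpickT : ∀ v, N.isRet v → (pick v, v) ∈ T := fun v hv => Or.inr ⟨hv, rfl⟩
    have huniq : ∀ u u' v : V, (u, v) ∈ T → (u', v) ∈ T → u = u' := by
      intro u u' v h1 h2
      rcases h1 with ⟨h1a, h1r⟩ | ⟨h1r, h1e⟩ <;> rcases h2 with ⟨h2a, h2r⟩ | ⟨h2r, h2e⟩
      · exact N.indeg_unique h1r h1a h2a
      · exact absurd h2r h1r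
      · exact absurd h1r h2r
      · simp only at h1e h2e; rw [h1e, h2e]
    have hrootnp : ∀ u, (u, N.root) ∉ T := fun u hu => N.root_indeg u (hTsub _ hu)
    have hparT : ∀ v ∈ N.verts, v ≠ N.root → ∃ p, (p, v) ∈ T := by
      intro v hv hvr
      obtain ⟨u, hu⟩ := N.parent_exists hv hvr
      by_cases hr : N.isRet v
      · exact ⟨pick v, hpickT v hr⟩
      · exact ⟨u, Or.inl ⟨hu, hr⟩⟩
    have hreachT : ∀ v ∈ N.verts,
        Relation.ReflTransGen (fun a b => (a, b) ∈ T) N.root v := by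
      have key : ∀ n : ℕ, ∀ v ∈ N.verts, (N.above v).ncard = n →
          Relation.ReflTransGen (fun a b => (a, b) ∈ T) N.root v := by
        intro n
        induction n using Nat.strong_induction_on with
        | _ n ih =>
          intro v hv hn
          by_cases hvr : v = N.root
          · rw [hvr]
          · obtain ⟨p, hp⟩ := hparT v hv hvr
            have hpa := hTsub _ hp
            have hpv := (N.arc_mem _ hpa).1
            exact (ih _ (hn ▸ N.above_lt hpa) p hpv rfl).tail hp
      intro v hv; exact key _ v hv rfl
    have hvertsT : ∀ v ∈ N.verts, PhyloNetwork.inTree T N.root v := by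
      intro v hv
      by_cases hvr : v = N.root
      · exact Or.inl hvr
      · obtain ⟨p, hp⟩ := hparT v hv hvr
        exact Or.inr (Or.inl ⟨p, hp⟩)
    have hinTverts : ∀ v, PhyloNetwork.inTree T N.root v → v ∈ N.verts := by
      rintro v (rfl | ⟨u, hu⟩ | ⟨u, hu⟩)
      · exact N.root_mem
      · exact (N.arc_mem _ (hTsub _ hu)).2
      · exact (N.arc_mem _ (hTsub _ hu)).1
    have hsinks : {v | PhyloNetwork.inTree T N.root v ∧ ∀ u, (v, u) ∉ T} = N.leaves := by
      ext v
      constructor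
      · rintro ⟨hin, hnout⟩
        have hv := hinTverts v hin
        refine ⟨hv, fun u hu => ?_⟩
        obtain ⟨c, hc, hcr⟩ := hTC v hv ⟨u, hu⟩
        exact hnout c (Or.inl ⟨hc, hcr⟩)
      · rintro ⟨hv, hl⟩
        exact ⟨hvertsT v hv, fun u hu => hl u (hTsub _ hu)⟩
    refine ⟨T, ⟨hTsub, huniq, hrootnp, fun v hv => hreachT v (hinTverts v hv), hsinks⟩, ?_⟩
    -- weight computation
    have hfilter : (@Finset.filter (V × V) (fun e => e ∈ T)
        (fun a => Classical.propDecidable _) N.arcs) =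
        N.arcs.filter (fun e => N.isTreeArc e) ∪
          (N.verts.filter (fun v => N.isRet v)).image (fun v => (pick v, v)) := by
      ext e
      simp only [Finset.mem_filter, Finset.mem_union, Finset.mem_image]
      constructor
      · rintro ⟨ha, (ht | ⟨hr, he⟩)⟩
        · exact Or.inl ⟨ha, ht⟩
        · refine Or.inr ⟨e.2, ⟨(N.arc_mem _ ha).2, hr⟩, ?_⟩
          exact Prod.ext he.symm rfl
      · rintro (⟨ha, ht⟩ | ⟨v, hv, rfl⟩)
        · exact ⟨ha, Or.inl ht⟩
        · exact ⟨(hpick v hv.2).1, Or.inr ⟨hv.2, rfl⟩⟩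
    have hdisj : Disjoint (N.arcs.filter (fun e => N.isTreeArc e))
        ((N.verts.filter (fun v => N.isRet v)).image (fun v => (pick v, v))) := by
      rw [Finset.disjoint_left]
      rintro e he1 he2
      obtain ⟨v, hv, rfl⟩ := Finset.mem_image.mp he2
      exact (Finset.mem_filter.mp he1).2.2 (Finset.mem_filter.mp hv).2
    have hinj : ∀ v ∈ N.verts.filter (fun v => N.isRet v),
        ∀ v' ∈ N.verts.filter (fun v => N.isRet v),
          (pick v, v) = (pick v', v') → v = v' := by
      intro v _ v' _ h
      exact (Prod.ext_iff.mp h).2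
    rw [PhyloNetwork.subtreeWeight, hfilter, Finset.sum_union hdisj,
      Finset.sum_image hinj]
    congr 1
    refine Finset.sum_congr rfl (fun v hv => ?_)
    exact ((hpick v (Finset.mem_filter.mp hv).2).2).symm
  · -- lower bound
    rintro t ⟨T, hT, rfl⟩
    have hTA_sub : N.arcs.filter (fun e => N.isTreeArc e) ⊆
        N.arcs.filter (fun e => e ∈ T) := by
      intro e he
      have h := Finset.mem_filter.mp he
      exact Finset.mem_filter.mpr ⟨h.1, PhyloNetwork.treeArc_mem hT hTC h.2⟩
    have hpar : ∀ v : V, ∃ p, N.isRet v → (p, v) ∈ T := by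
      intro v
      by_cases h : N.isRet v
      · obtain ⟨p, hp⟩ := PhyloNetwork.ret_parent hT hTC h
        exact ⟨p, fun _ => hp⟩
      · exact ⟨N.root, fun hh => absurd hh h⟩
    choose p hp using hpar
    have himg : (N.verts.filter (fun v => N.isRet v)).image (fun v => (p v, v)) ⊆
        N.arcs.filter (fun e => e ∈ T) \ N.arcs.filter (fun e => N.isTreeArc e) := by
      intro e he
      obtain ⟨v, hv, rfl⟩ := Finset.mem_image.mp he
      have hr := (Finset.mem_filter.mp hv).2
      have hpt := hp v hr
      refine Finset.mem_sdiff.mpr ⟨Finset.mem_filter.mpr ⟨hT.subset _ hpt, hpt⟩, ?_⟩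
      intro hTA'
      exact (Finset.mem_filter.mp hTA').2.2 hr
    have hinj : ∀ v ∈ N.verts.filter (fun v => N.isRet v),
        ∀ v' ∈ N.verts.filter (fun v => N.isRet v),
          (p v, v) = (p v', v') → v = v' := by
      intro v _ v' _ h
      exact (Prod.ext_iff.mp h).2
    have step1 : ∑ v ∈ N.verts.filter (fun v => N.isRet v),
          sInf {t : ℝ | ∃ u : V, (u, v) ∈ N.arcs ∧ t = N.w (u, v)} ≤
        ∑ v ∈ N.verts.filter (fun v => N.isRet v), N.w (p v, v) := by
      refine Finset.sum_le_sum (fun v hv => ?_)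
      have hr := (Finset.mem_filter.mp hv).2
      exact N.csInf_inWeights_le (hT.subset _ (hp v hr))
    have step2 : ∑ v ∈ N.verts.filter (fun v => N.isRet v), N.w (p v, v) =
        ∑ e ∈ (N.verts.filter (fun v => N.isRet v)).image (fun v => (p v, v)), N.w e :=
      (Finset.sum_image hinj).symm
    have step3 : ∑ e ∈ (N.verts.filter (fun v => N.isRet v)).image (fun v => (p v, v)),
          N.w e ≤
        ∑ e ∈ N.arcs.filter (fun e => e ∈ T) \ N.arcs.filter (fun e => N.isTreeArc e),
          N.w e :=
      Finset.sum_le_sum_of_subset_of_nonneg himg (fun e _ _ => N.w_nonneg e)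
    have final : (∑ e ∈ N.arcs.filter (fun e => N.isTreeArc e), N.w e) +
          ∑ e ∈ N.arcs.filter (fun e => e ∈ T) \ N.arcs.filter (fun e => N.isTreeArc e),
            N.w e =
        ∑ e ∈ N.arcs.filter (fun e => e ∈ T), N.w e := by
      rw [add_comm]
      exact Finset.sum_sdiff hTA_sub
    rw [PhyloNetwork.subtreeWeight, ← final]
    have := le_trans step1 (le_of_eq step2 |>.trans step3)
    linarith
end

section
/- Let N be a rooted weighted digraph with root ρ, leaf set X and non-negative arc weights, and let (u,v) be an arc of N with weight w(u,v). Let N' be the rooted weighted digraph obtained from N by replacing (u,v) with two arcs (u,m) and (m,v), where m is a new vertex, assigning weights w(u,m) = 0 and w(m,v) = w(u,v), and adjoining a new leaf ℓ via a new arc (m,ℓ) of weight 0. Then for every non-empty subset S ⊆ X, the minimum weight of a connecting subtree for S in N' equals the minimum weight of a connecting subtree for S in N, i.e. MinWeightTree-PD_{N'}(S) = MinWeightTree-PD_N(S). -/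
attribute [local instance] Classical.propDecidable

open RWDigraph

namespace SubdivAux

open RWDigraph

variable {V : Type}

/-- Forward image of a subtree under subdivision of the arc `(u,v)`. -/
def fwdT (u v : V) (T : Set (V × V)) : Set ((V ⊕ Bool) × (V ⊕ Bool)) :=
  {q | (∃ a b, q = (Sum.inl a, Sum.inl b) ∧ (a, b) ∈ T ∧ (a, b) ≠ (u, v)) ∨
    ((u, v) ∈ T ∧
      (q = (Sum.inl u, Sum.inr true) ∨ q = (Sum.inr true, Sum.inl v)))}

/-- Backward image of a subtree under subdivision. -/
def backT (u v : V) (T' : Set ((V ⊕ Bool) × (V ⊕ Bool))) : Set (V × V) :=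
  {p | (Sum.inl p.1, Sum.inl p.2) ∈ T' ∨
    (p = (u, v) ∧ (Sum.inr true, Sum.inl v) ∈ T')}

variable [DecidableEq V]

lemma shape (N : RWDigraph V) (u v : V) (N' : RWDigraph (V ⊕ Bool))
    (harcs : N'.arcs =
      (N.arcs.erase (u, v)).image (fun e => (Sum.inl e.1, Sum.inl e.2)) ∪
        {(Sum.inl u, Sum.inr true), (Sum.inr true, Sum.inl v),
          (Sum.inr true, Sum.inr false)})
    (T' : Set ((V ⊕ Bool) × (V ⊕ Bool))) (hsub : ∀ e ∈ T', e ∈ N'.arcs) :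
    ∀ q ∈ T', (∃ a b : V, q = (Sum.inl a, Sum.inl b) ∧ (a, b) ∈ N.arcs ∧ (a, b) ≠ (u, v)) ∨
      q = (Sum.inl u, Sum.inr true) ∨ q = (Sum.inr true, Sum.inl v) ∨
      q = (Sum.inr true, Sum.inr false) := by
  intro q hq
  have h := hsub q hq
  rw [harcs] at h
  rcases Finset.mem_union.mp h with h | h
  · obtain ⟨e, he, heq⟩ := Finset.mem_image.mp h
    obtain ⟨hne, hmem⟩ := Finset.mem_erase.mp he
    exact Or.inl ⟨e.1, e.2, heq.symm, hmem, hne⟩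
  · simp only [Finset.mem_insert, Finset.mem_singleton] at h
    tauto

lemma no_ml (N : RWDigraph V) (u v : V) (N' : RWDigraph (V ⊕ Bool))
    (harcs : N'.arcs =
      (N.arcs.erase (u, v)).image (fun e => (Sum.inl e.1, Sum.inl e.2)) ∪
        {(Sum.inl u, Sum.inr true), (Sum.inr true, Sum.inl v),
          (Sum.inr true, Sum.inr false)})
    (S : Set V) (T' : Set ((V ⊕ Bool) × (V ⊕ Bool)))
    (hT' : N'.IsConnectingSubtree T' (Sum.inl '' S)) :
    ((Sum.inr true : V ⊕ Bool), (Sum.inr false : V ⊕ Bool)) ∉ T' := by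
  intro h
  have hsink : (Sum.inr false : V ⊕ Bool) ∈ Sum.inl '' S := by
    rw [← hT'.sinks]
    refine ⟨Or.inr (Or.inl ⟨_, h⟩), ?_⟩
    intro p hp
    rcases shape N u v N' harcs T' hT'.subset _ hp with ⟨a, b, heq, _, _⟩ | heq | heq | heq <;>
      simp [Prod.ext_iff] at heq
  obtain ⟨y, _, hy⟩ := hsink
  simp at hy

lemma no_uv (N : RWDigraph V) (u v : V) (N' : RWDigraph (V ⊕ Bool))
    (harcs : N'.arcs =
      (N.arcs.erase (u, v)).image (fun e => (Sum.inl e.1, Sum.inl e.2)) ∪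
        {(Sum.inl u, Sum.inr true), (Sum.inr true, Sum.inl v),
          (Sum.inr true, Sum.inr false)})
    (T' : Set ((V ⊕ Bool) × (V ⊕ Bool))) (hsub : ∀ e ∈ T', e ∈ N'.arcs) :
    ((Sum.inl u : V ⊕ Bool), (Sum.inl v : V ⊕ Bool)) ∉ T' := by
  intro h
  rcases shape N u v N' harcs T' hsub _ h with ⟨a, b, heq, _, hne⟩ | heq | heq | heq
  · rw [Prod.mk.injEq] at heq
    obtain ⟨h1, h2⟩ := heq
    injection h1 with h1; injection h2 with h2
    exact hne (by rw [← h1, ← h2])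
  · simp [Prod.ext_iff] at heq
  · simp [Prod.ext_iff] at heq
  · simp [Prod.ext_iff] at heq

lemma um_iff_mv (N : RWDigraph V) (u v : V) (N' : RWDigraph (V ⊕ Bool))
    (hroot : N'.root = Sum.inl N.root)
    (harcs : N'.arcs =
      (N.arcs.erase (u, v)).image (fun e => (Sum.inl e.1, Sum.inl e.2)) ∪
        {(Sum.inl u, Sum.inr true), (Sum.inr true, Sum.inl v),
          (Sum.inr true, Sum.inr false)})
    (S : Set V) (T' : Set ((V ⊕ Bool) × (V ⊕ Bool)))
    (hT' : N'.IsConnectingSubtree T' (Sum.inl '' S)) :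
    ((Sum.inl u : V ⊕ Bool), (Sum.inr true : V ⊕ Bool)) ∈ T' ↔
      ((Sum.inr true : V ⊕ Bool), (Sum.inl v : V ⊕ Bool)) ∈ T' := by
  constructor
  · intro h
    by_contra hmv
    have hsink : (Sum.inr true : V ⊕ Bool) ∈ Sum.inl '' S := by
      rw [← hT'.sinks]
      refine ⟨Or.inr (Or.inl ⟨_, h⟩), ?_⟩
      intro p hp
      rcases shape N u v N' harcs T' hT'.subset _ hp with ⟨a, b, heq, _, _⟩ | heq | heq | heq
      · simp [Prod.ext_iff] at heq
      · simp [Prod.ext_iff] at heq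
      · rw [Prod.mk.injEq] at heq
        exact hmv (heq.2 ▸ hp)
      · rw [Prod.mk.injEq] at heq
        exact no_ml N u v N' harcs S T' hT' (heq.2 ▸ hp)
    obtain ⟨y, _, hy⟩ := hsink
    simp at hy
  · intro h
    have hm : Relation.ReflTransGen (fun a b => (a, b) ∈ T') N'.root (Sum.inr true) :=
      hT'.reach_root _ (Or.inr (Or.inr ⟨_, h⟩))
    rcases hm.cases_tail with heq | ⟨c, _, hc⟩
    · rw [hroot] at heq
      simp at heq
    · rcases shape N u v N' harcs T' hT'.subset _ hc with ⟨a, b, heq, _, _⟩ | heq | heq | heq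
      · simp [Prod.ext_iff] at heq
      · rw [Prod.mk.injEq] at heq
        rw [heq.1] at hc
        exact hc
      · simp [Prod.ext_iff] at heq
      · simp [Prod.ext_iff] at heq

lemma fwd_subtree (N : RWDigraph V) (u v : V) (huv : (u, v) ∈ N.arcs)
    (N' : RWDigraph (V ⊕ Bool)) (hroot : N'.root = Sum.inl N.root)
    (harcs : N'.arcs =
      (N.arcs.erase (u, v)).image (fun e => (Sum.inl e.1, Sum.inl e.2)) ∪
        {(Sum.inl u, Sum.inr true), (Sum.inr true, Sum.inl v),
          (Sum.inr true, Sum.inr false)})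
    (S : Set V) (T : Set (V × V)) (hT : N.IsConnectingSubtree T S) :
    N'.IsConnectingSubtree (fwdT u v T) (Sum.inl '' S) := by
  have lift : ∀ x : V, Relation.ReflTransGen (fun a b => (a, b) ∈ T) N.root x →
      Relation.ReflTransGen (fun a b => (a, b) ∈ fwdT u v T)
        (Sum.inl N.root) (Sum.inl x) := by
    intro x hx
    induction hx with
    | refl => exact .refl
    | @tail b c hpath hstep ih =>
      by_cases h : (b, c) = (u, v)
      · rw [Prod.mk.injEq] at h
        obtain ⟨rfl, rfl⟩ := h
        exact (ih.tail (Or.inr ⟨hstep, Or.inl rfl⟩)).tail (Or.inr ⟨hstep, Or.inr rfl⟩)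
      · exact ih.tail (Or.inl ⟨b, c, rfl, hstep, h⟩)
  constructor
  · -- subset
    intro q hq
    rcases hq with ⟨a, b, rfl, hab, hne⟩ | ⟨hUV, rfl | rfl⟩
    · rw [harcs]
      exact Finset.mem_union_left _ (Finset.mem_image.mpr
        ⟨(a, b), Finset.mem_erase.mpr ⟨hne, hT.subset _ hab⟩, rfl⟩)
    · rw [harcs]
      exact Finset.mem_union_right _ (by simp)
    · rw [harcs]
      exact Finset.mem_union_right _ (by simp)
  · -- unique_parent
    intro q q' r hq hq'
    rcases hq with ⟨a, b, heq, hab, hne⟩ | ⟨hUV, heq | heq⟩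
    · rw [Prod.mk.injEq] at heq
      obtain ⟨rfl, rfl⟩ := heq
      rcases hq' with ⟨a', b', heq', hab', hne'⟩ | ⟨hUV', heq' | heq'⟩
      · rw [Prod.mk.injEq] at heq'
        obtain ⟨rfl, h2⟩ := heq'
        injection h2 with h2
        subst h2
        rw [hT.unique_parent a a' b hab hab']
      · rw [Prod.mk.injEq] at heq'
        exact absurd heq'.2 (by simp)
      · rw [Prod.mk.injEq] at heq'
        obtain ⟨rfl, h2⟩ := heq'
        injection h2 with h2
        rw [h2] at hab
        exact absurd (by rw [hT.unique_parent a u v hab hUV', h2]) hne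
    · rw [Prod.mk.injEq] at heq
      obtain ⟨rfl, rfl⟩ := heq
      rcases hq' with ⟨a', b', heq', hab', hne'⟩ | ⟨hUV', heq' | heq'⟩
      · rw [Prod.mk.injEq] at heq'
        exact absurd heq'.2.symm (by simp)
      · rw [Prod.mk.injEq] at heq'
        rw [heq'.1]
      · rw [Prod.mk.injEq] at heq'
        exact absurd heq'.2.symm (by simp)
    · rw [Prod.mk.injEq] at heq
      obtain ⟨rfl, rfl⟩ := heq
      rcases hq' with ⟨a', b', heq', hab', hne'⟩ | ⟨hUV', heq' | heq'⟩
      · rw [Prod.mk.injEq] at heq'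
        obtain ⟨rfl, h2⟩ := heq'
        injection h2 with h2
        rw [← h2] at hab'
        exact absurd (by rw [hT.unique_parent a' u v hab' hUV, ← h2]) hne'
      · rw [Prod.mk.injEq] at heq'
        exact absurd heq'.2 (by simp)
      · rw [Prod.mk.injEq] at heq'
        rw [heq'.1]
  · -- root_no_parent
    intro q hq
    rcases hq with ⟨a, b, heq, hab, hne⟩ | ⟨hUV, heq | heq⟩
    · rw [hroot, Prod.mk.injEq] at heq
      obtain ⟨rfl, h2⟩ := heq
      injection h2 with h2
      subst h2
      exact hT.root_no_parent a hab
    · rw [hroot, Prod.mk.injEq] at heq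
      exact absurd heq.2 (by simp)
    · rw [hroot, Prod.mk.injEq] at heq
      obtain ⟨h1, h2⟩ := heq
      injection h2 with h2
      rw [← h2] at hUV
      exact hT.root_no_parent u hUV
  · -- reach_root
    intro q hq
    rcases hq with rfl | ⟨⟨p, hp⟩ | ⟨p, hp⟩⟩
    · exact .refl
    · rcases hp with ⟨a, b, heq, hab, hne⟩ | ⟨hUV, heq | heq⟩
      · rw [Prod.mk.injEq] at heq
        obtain ⟨rfl, rfl⟩ := heq
        rw [hroot]
        exact lift b (hT.reach_root b (Or.inr (Or.inl ⟨a, hab⟩)))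
      · rw [Prod.mk.injEq] at heq
        obtain ⟨rfl, rfl⟩ := heq
        rw [hroot]
        exact (lift u (hT.reach_root u (Or.inr (Or.inr ⟨v, hUV⟩)))).tail
          (Or.inr ⟨hUV, Or.inl rfl⟩)
      · rw [Prod.mk.injEq] at heq
        obtain ⟨rfl, rfl⟩ := heq
        rw [hroot]
        exact lift v (hT.reach_root v (Or.inr (Or.inl ⟨u, hUV⟩)))
    · rcases hp with ⟨a, b, heq, hab, hne⟩ | ⟨hUV, heq | heq⟩
      · rw [Prod.mk.injEq] at heq
        obtain ⟨rfl, rfl⟩ := heq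
        rw [hroot]
        exact lift a (hT.reach_root a (Or.inr (Or.inr ⟨b, hab⟩)))
      · rw [Prod.mk.injEq] at heq
        obtain ⟨rfl, rfl⟩ := heq
        rw [hroot]
        exact lift u (hT.reach_root u (Or.inr (Or.inr ⟨v, hUV⟩)))
      · rw [Prod.mk.injEq] at heq
        obtain ⟨rfl, rfl⟩ := heq
        rw [hroot]
        exact (lift u (hT.reach_root u (Or.inr (Or.inr ⟨v, hUV⟩)))).tail
          (Or.inr ⟨hUV, Or.inl rfl⟩)
  · -- sinks
    ext q
    simp only [Set.mem_setOf_eq, Set.mem_image]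
    have key : ∀ x : V, inTree T N.root x →
        (∀ p, ((Sum.inl x : V ⊕ Bool), p) ∉ fwdT u v T) → x ∈ S := by
      intro x hx hnc
      have hxs : ∀ y, (x, y) ∉ T := by
        intro y hy
        by_cases h : (x, y) = (u, v)
        · rw [Prod.mk.injEq] at h
          obtain ⟨rfl, rfl⟩ := h
          exact hnc _ (Or.inr ⟨hy, Or.inl rfl⟩)
        · exact hnc _ (Or.inl ⟨x, y, rfl, hy, h⟩)
      rw [← hT.sinks]
      exact ⟨hx, hxs⟩
    constructor
    · rintro ⟨hin, hnochild⟩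
      rcases hin with rfl | ⟨⟨p, hp⟩ | ⟨p, hp⟩⟩
      · refine ⟨N.root, key _ (Or.inl rfl) ?_, hroot.symm⟩
        intro p hp
        exact hnochild p (by rw [hroot]; exact hp)
      · rcases hp with ⟨a, b, heq, hab, hne⟩ | ⟨hUV, heq | heq⟩
        · rw [Prod.mk.injEq] at heq
          obtain ⟨rfl, rfl⟩ := heq
          exact ⟨b, key b (Or.inr (Or.inl ⟨a, hab⟩)) hnochild, rfl⟩
        · rw [Prod.mk.injEq] at heq
          obtain ⟨rfl, rfl⟩ := heq
          exact absurd (Or.inr ⟨hUV, Or.inr rfl⟩ :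
            ((Sum.inr true : V ⊕ Bool), Sum.inl v) ∈ fwdT u v T) (hnochild _)
        · rw [Prod.mk.injEq] at heq
          obtain ⟨rfl, rfl⟩ := heq
          exact ⟨v, key v (Or.inr (Or.inl ⟨u, hUV⟩)) hnochild, rfl⟩
      · exact absurd hp (hnochild p)
    · rintro ⟨x, hxS, rfl⟩
      have hx : inTree T N.root x ∧ ∀ y, (x, y) ∉ T := by
        rw [← hT.sinks] at hxS
        exact hxS
      obtain ⟨hx1, hx2⟩ := hx
      constructor
      · rcases hx1 with rfl | ⟨⟨p, hp⟩ | ⟨p, hp⟩⟩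
        · exact Or.inl hroot.symm
        · by_cases h : (p, x) = (u, v)
          · rw [Prod.mk.injEq] at h
            obtain ⟨rfl, rfl⟩ := h
            exact Or.inr (Or.inl ⟨Sum.inr true, Or.inr ⟨hp, Or.inr rfl⟩⟩)
          · exact Or.inr (Or.inl ⟨Sum.inl p, Or.inl ⟨p, x, rfl, hp, h⟩⟩)
        · exact absurd hp (hx2 p)
      · intro p hp
        rcases hp with ⟨a, b, heq, hab, hne⟩ | ⟨hUV, heq | heq⟩
        · rw [Prod.mk.injEq] at heq
          obtain ⟨h1, rfl⟩ := heq
          injection h1 with h1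
          subst h1
          exact hx2 b hab
        · rw [Prod.mk.injEq] at heq
          obtain ⟨h1, rfl⟩ := heq
          injection h1 with h1
          subst h1
          exact hx2 v hUV
        · rw [Prod.mk.injEq] at heq
          exact absurd heq.1 (by simp)

lemma back_subtree (N : RWDigraph V) (u v : V) (huv : (u, v) ∈ N.arcs)
    (N' : RWDigraph (V ⊕ Bool)) (hroot : N'.root = Sum.inl N.root)
    (harcs : N'.arcs =
      (N.arcs.erase (u, v)).image (fun e => (Sum.inl e.1, Sum.inl e.2)) ∪
        {(Sum.inl u, Sum.inr true), (Sum.inr true, Sum.inl v),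
          (Sum.inr true, Sum.inr false)})
    (S : Set V) (T' : Set ((V ⊕ Bool) × (V ⊕ Bool)))
    (hT' : N'.IsConnectingSubtree T' (Sum.inl '' S)) :
    N.IsConnectingSubtree (backT u v T') S := by
  have hsh := shape N u v N' harcs T' hT'.subset
  have hCD := um_iff_mv N u v N' hroot harcs S T' hT'
  have hml := no_ml N u v N' harcs S T' hT'
  have mem_tree : ∀ x : V, inTree (backT u v T') N.root x →
      inTree T' N'.root (Sum.inl x) := by
    intro x hx
    rcases hx with rfl | ⟨⟨p, hp⟩ | ⟨p, hp⟩⟩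
    · exact Or.inl hroot.symm
    · rcases hp with h | ⟨heq, hmv⟩
      · exact Or.inr (Or.inl ⟨_, h⟩)
      · rw [Prod.mk.injEq] at heq
        obtain ⟨rfl, rfl⟩ := heq
        exact Or.inr (Or.inl ⟨_, hmv⟩)
    · rcases hp with h | ⟨heq, hmv⟩
      · exact Or.inr (Or.inr ⟨_, h⟩)
      · rw [Prod.mk.injEq] at heq
        obtain ⟨rfl, rfl⟩ := heq
        exact Or.inr (Or.inr ⟨_, hCD.mpr hmv⟩)
  have proj : ∀ q : V ⊕ Bool,
      Relation.ReflTransGen (fun a b => (a, b) ∈ T') N'.root q →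
      (∀ x : V, q = Sum.inl x →
        Relation.ReflTransGen (fun a b => (a, b) ∈ backT u v T') N.root x) ∧
      (q = Sum.inr true →
        Relation.ReflTransGen (fun a b => (a, b) ∈ backT u v T') N.root u) := by
    intro q hq
    induction hq with
    | refl =>
      constructor
      · intro x hx
        rw [hroot] at hx
        injection hx with hx
        subst hx
        exact .refl
      · intro h
        rw [hroot] at h
        simp at h
    | @tail b c hpath hstep ih =>
      rcases hsh _ hstep with ⟨a, b', heq, hmem, hne⟩ | heq | heq | heq
      · rw [Prod.mk.injEq] at heq
        obtain ⟨rfl, rfl⟩ := heq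
        constructor
        · intro x hx
          injection hx with hx
          rw [← hx]
          exact (ih.1 a rfl).tail (Or.inl hstep)
        · intro h
          simp at h
      · rw [Prod.mk.injEq] at heq
        obtain ⟨rfl, rfl⟩ := heq
        constructor
        · intro x hx
          simp at hx
        · intro _
          exact ih.1 u rfl
      · rw [Prod.mk.injEq] at heq
        obtain ⟨rfl, rfl⟩ := heq
        constructor
        · intro x hx
          injection hx with hx
          rw [← hx]
          exact (ih.2 rfl).tail (Or.inr ⟨rfl, hstep⟩)
        · intro h
          simp at h
      · rw [Prod.mk.injEq] at heq
        obtain ⟨rfl, rfl⟩ := heq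
        exact absurd hstep hml
  constructor
  · -- subset
    rintro ⟨a, b⟩ hp
    rcases hp with h | ⟨heq, hmv⟩
    · rcases hsh _ h with ⟨a', b', heq, hmem, _⟩ | heq | heq | heq
      · rw [Prod.mk.injEq] at heq
        obtain ⟨h1, h2⟩ := heq
        injection h1 with h1
        injection h2 with h2
        rw [← h1, ← h2] at hmem
        exact hmem
      · rw [Prod.mk.injEq] at heq
        exact absurd heq.2 (by simp)
      · rw [Prod.mk.injEq] at heq
        exact absurd heq.1 (by simp)
      · rw [Prod.mk.injEq] at heq
        exact absurd heq.1 (by simp)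
    · rw [Prod.mk.injEq] at heq
      obtain ⟨rfl, rfl⟩ := heq
      exact huv
  · -- unique_parent
    intro a a' b h h'
    rcases h with h | ⟨heq, hmv⟩
    · rcases h' with h' | ⟨heq', hmv'⟩
      · have := hT'.unique_parent _ _ _ h h'
        injection this
      · rw [Prod.mk.injEq] at heq'
        obtain ⟨rfl, rfl⟩ := heq'
        have := hT'.unique_parent _ _ _ h hmv'
        simp at this
    · rcases h' with h' | ⟨heq', hmv'⟩
      · rw [Prod.mk.injEq] at heq
        obtain ⟨rfl, rfl⟩ := heq
        have := hT'.unique_parent _ _ _ h' hmv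
        simp at this
      · rw [Prod.mk.injEq] at heq
        rw [Prod.mk.injEq] at heq'
        rw [heq.1, heq'.1]
  · -- root_no_parent
    intro a h
    rcases h with h | ⟨heq, hmv⟩
    · exact hT'.root_no_parent (Sum.inl a) (by rw [hroot]; exact h)
    · rw [Prod.mk.injEq] at heq
      exact hT'.root_no_parent (Sum.inr true) (by rw [hroot, heq.2]; exact hmv)
  · -- reach_root
    intro x hx
    exact (proj _ (hT'.reach_root _ (mem_tree x hx))).1 x rfl
  · -- sinks
    ext x
    simp only [Set.mem_setOf_eq]
    constructor
    · rintro ⟨hin, hnc⟩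
      have h1 : (Sum.inl x : V ⊕ Bool) ∈ (Sum.inl '' S : Set (V ⊕ Bool)) := by
        rw [← hT'.sinks]
        refine ⟨mem_tree x hin, ?_⟩
        intro p hp
        rcases hsh _ hp with ⟨a, b, heq, hmem, hne⟩ | heq | heq | heq
        · rw [Prod.mk.injEq] at heq
          obtain ⟨h1, h2⟩ := heq
          injection h1 with h1
          refine hnc b (Or.inl ?_)
          show (Sum.inl x, Sum.inl b) ∈ T'
          rw [← h2]
          exact hp
        · rw [Prod.mk.injEq] at heq
          obtain ⟨h1, h2⟩ := heq
          injection h1 with h1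
          rw [h1, h2] at hp
          refine hnc v (Or.inr ⟨?_, hCD.mp hp⟩)
          rw [h1]
        · rw [Prod.mk.injEq] at heq
          exact absurd heq.1 (by simp)
        · rw [Prod.mk.injEq] at heq
          exact absurd heq.1 (by simp)
      obtain ⟨y, hy, hyx⟩ := h1
      injection hyx with hyx
      rw [← hyx]
      exact hy
    · intro hxS
      have h1 : (Sum.inl x : V ⊕ Bool) ∈ (Sum.inl '' S : Set (V ⊕ Bool)) := ⟨x, hxS, rfl⟩
      rw [← hT'.sinks] at h1
      obtain ⟨hin', hnc'⟩ := h1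
      constructor
      · rcases hin' with heq | ⟨⟨p, hp⟩ | ⟨p, hp⟩⟩
        · rw [hroot] at heq
          injection heq with heq
          exact Or.inl heq
        · rcases hsh _ hp with ⟨a, b, heq, hmem, hne⟩ | heq | heq | heq
          · rw [Prod.mk.injEq] at heq
            obtain ⟨rfl, h2⟩ := heq
            injection h2 with h2
            rw [h2]
            refine Or.inr (Or.inl ⟨a, Or.inl ?_⟩)
            rw [← h2]
            exact hp
          · rw [Prod.mk.injEq] at heq
            exact absurd heq.2 (by simp)
          · rw [Prod.mk.injEq] at heq
            obtain ⟨rfl, h2⟩ := heq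
            injection h2 with h2
            rw [h2] at hp ⊢
            exact Or.inr (Or.inl ⟨u, Or.inr ⟨rfl, hp⟩⟩)
          · rw [Prod.mk.injEq] at heq
            exact absurd heq.2 (by simp)
        · exact absurd hp (hnc' p)
      · intro b hb
        rcases hb with h | ⟨heq, hmv⟩
        · exact hnc' _ h
        · rw [Prod.mk.injEq] at heq
          obtain ⟨rfl, rfl⟩ := heq
          exact hnc' _ (hCD.mpr hmv)

lemma fwd_back (N : RWDigraph V) (u v : V)
    (N' : RWDigraph (V ⊕ Bool)) (hroot : N'.root = Sum.inl N.root)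
    (harcs : N'.arcs =
      (N.arcs.erase (u, v)).image (fun e => (Sum.inl e.1, Sum.inl e.2)) ∪
        {(Sum.inl u, Sum.inr true), (Sum.inr true, Sum.inl v),
          (Sum.inr true, Sum.inr false)})
    (S : Set V) (T' : Set ((V ⊕ Bool) × (V ⊕ Bool)))
    (hT' : N'.IsConnectingSubtree T' (Sum.inl '' S)) :
    fwdT u v (backT u v T') = T' := by
  have hCD := um_iff_mv N u v N' hroot harcs S T' hT'
  ext q
  constructor
  · intro hq
    rcases hq with ⟨a, b, rfl, hab, hne⟩ | ⟨hUV, rfl | rfl⟩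
    · rcases hab with h | ⟨heq, _⟩
      · exact h
      · exact absurd heq hne
    · rcases hUV with h | ⟨_, hmv⟩
      · exact absurd h (no_uv N u v N' harcs T' hT'.subset)
      · exact hCD.mpr hmv
    · rcases hUV with h | ⟨_, hmv⟩
      · exact absurd h (no_uv N u v N' harcs T' hT'.subset)
      · exact hmv
  · intro hq
    rcases shape N u v N' harcs T' hT'.subset _ hq with ⟨a, b, heq, hmem, hne⟩ | heq | heq | heq
    · subst heq
      exact Or.inl ⟨a, b, rfl, Or.inl hq, hne⟩
    · subst heq
      exact Or.inr ⟨Or.inr ⟨rfl, hCD.mp hq⟩, Or.inl rfl⟩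
    · subst heq
      exact Or.inr ⟨Or.inr ⟨rfl, hq⟩, Or.inr rfl⟩
    · subst heq
      exact absurd hq (no_ml N u v N' harcs S T' hT')

lemma fwd_weight (N : RWDigraph V) (u v : V) (huv : (u, v) ∈ N.arcs)
    (N' : RWDigraph (V ⊕ Bool))
    (harcs : N'.arcs =
      (N.arcs.erase (u, v)).image (fun e => (Sum.inl e.1, Sum.inl e.2)) ∪
        {(Sum.inl u, Sum.inr true), (Sum.inr true, Sum.inl v),
          (Sum.inr true, Sum.inr false)})
    (hw_old : ∀ a b : V, N'.w (Sum.inl a, Sum.inl b) = N.w (a, b))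
    (hw_um : N'.w (Sum.inl u, Sum.inr true) = 0)
    (hw_mv : N'.w (Sum.inr true, Sum.inl v) = N.w (u, v))
    (T : Set (V × V)) (hsub : ∀ e ∈ T, e ∈ N.arcs) :
    N'.subtreeWeight (fwdT u v T) = N.subtreeWeight T := by
  classical
  unfold RWDigraph.subtreeWeight
  have key : N'.arcs.filter (fun e => e ∈ fwdT u v T) =
      ((N.arcs.filter (fun e => e ∈ T)).erase (u, v)).image
          (fun e => (Sum.inl e.1, Sum.inl e.2)) ∪
        (if (u, v) ∈ T then ({(Sum.inl u, Sum.inr true),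
            ((Sum.inr true : V ⊕ Bool), (Sum.inl v : V ⊕ Bool))} : Finset _) else ∅) := by
    ext q
    constructor
    · intro hq
      obtain ⟨hqA, hqT⟩ := Finset.mem_filter.mp hq
      rcases hqT with ⟨a, b, rfl, hab, hne⟩ | ⟨hUV, rfl | rfl⟩
      · exact Finset.mem_union_left _ (Finset.mem_image.mpr
          ⟨(a, b), Finset.mem_erase.mpr ⟨hne, Finset.mem_filter.mpr ⟨hsub _ hab, hab⟩⟩, rfl⟩)
      · rw [if_pos hUV]
        exact Finset.mem_union_right _ (by simp)
      · rw [if_pos hUV]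
        exact Finset.mem_union_right _ (by simp)
    · intro hq
      rcases Finset.mem_union.mp hq with h | h
      · obtain ⟨⟨e1, e2⟩, he, rfl⟩ := Finset.mem_image.mp h
        obtain ⟨hne, hef⟩ := Finset.mem_erase.mp he
        obtain ⟨heA, heT⟩ := Finset.mem_filter.mp hef
        refine Finset.mem_filter.mpr ⟨?_, Or.inl ⟨e1, e2, rfl, heT, hne⟩⟩
        rw [harcs]
        exact Finset.mem_union_left _ (Finset.mem_image.mpr
          ⟨(e1, e2), Finset.mem_erase.mpr ⟨hne, heA⟩, rfl⟩)
      · by_cases hUV : (u, v) ∈ T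
        · rw [if_pos hUV] at h
          rcases Finset.mem_insert.mp h with rfl | h
          · refine Finset.mem_filter.mpr ⟨?_, Or.inr ⟨hUV, Or.inl rfl⟩⟩
            rw [harcs]
            exact Finset.mem_union_right _ (by simp)
          · rw [Finset.mem_singleton] at h
            subst h
            refine Finset.mem_filter.mpr ⟨?_, Or.inr ⟨hUV, Or.inr rfl⟩⟩
            rw [harcs]
            exact Finset.mem_union_right _ (by simp)
        · rw [if_neg hUV] at h
          exact absurd h (Finset.notMem_empty _)
  have hdisj : Disjoint
      (((N.arcs.filter (fun e => e ∈ T)).erase (u, v)).image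
          (fun e => (Sum.inl e.1, Sum.inl e.2)))
      (if (u, v) ∈ T then ({(Sum.inl u, Sum.inr true),
          ((Sum.inr true : V ⊕ Bool), (Sum.inl v : V ⊕ Bool))} : Finset _) else ∅) := by
    rw [Finset.disjoint_left]
    intro q hq1 hq2
    obtain ⟨e, _, rfl⟩ := Finset.mem_image.mp hq1
    by_cases hUV : (u, v) ∈ T
    · rw [if_pos hUV] at hq2
      rcases Finset.mem_insert.mp hq2 with h | h
      · simp [Prod.ext_iff] at h
      · rw [Finset.mem_singleton] at h
        simp [Prod.ext_iff] at h
    · rw [if_neg hUV] at hq2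
      exact absurd hq2 (Finset.notMem_empty _)
  rw [key, Finset.sum_union hdisj, Finset.sum_image
    (by intro x _ y _ h; simpa [Prod.ext_iff] using h)]
  have hcongr : ∑ e ∈ (N.arcs.filter (fun e => e ∈ T)).erase (u, v),
      N'.w (Sum.inl e.1, Sum.inl e.2) =
      ∑ e ∈ (N.arcs.filter (fun e => e ∈ T)).erase (u, v), N.w e :=
    Finset.sum_congr rfl (fun e _ => hw_old e.1 e.2)
  rw [hcongr]
  by_cases hUV : (u, v) ∈ T
  · rw [if_pos hUV, Finset.sum_pair (by simp), hw_um, hw_mv]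
    have hmem : (u, v) ∈ N.arcs.filter (fun e => e ∈ T) :=
      Finset.mem_filter.mpr ⟨huv, hUV⟩
    rw [← Finset.add_sum_erase _ _ hmem]
    ring
  · rw [if_neg hUV, Finset.sum_empty, add_zero,
      Finset.erase_eq_of_notMem (by simp [Finset.mem_filter, hUV])]

end SubdivAux


/-- subdividing an arc `(u,v)` of `N` into `(u,m), (m,v)` with weights
`0` and `w(u,v)`, and attaching a new leaf `ℓ` to `m` by an arc of weight `0`, does not
change the minimum weight of a connecting subtree for any non-empty subset `S` of the
leaf set of `N`. Here `m = Sum.inr true` and `ℓ = Sum.inr false`. -/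
theorem minWeightTreePD_subdivide {V : Type} [DecidableEq V]
    (N : RWDigraph V) (u v : V) (huv : (u, v) ∈ N.arcs)
    (N' : RWDigraph (V ⊕ Bool))
    (hroot : N'.root = Sum.inl N.root)
    (hverts : N'.verts =
      N.verts.image Sum.inl ∪ {Sum.inr true, Sum.inr false})
    (harcs : N'.arcs =
      (N.arcs.erase (u, v)).image (fun e => (Sum.inl e.1, Sum.inl e.2)) ∪
        {(Sum.inl u, Sum.inr true), (Sum.inr true, Sum.inl v),
          (Sum.inr true, Sum.inr false)})
    (hw_old : ∀ a b : V, N'.w (Sum.inl a, Sum.inl b) = N.w (a, b))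
    (hw_um : N'.w (Sum.inl u, Sum.inr true) = 0)
    (hw_mv : N'.w (Sum.inr true, Sum.inl v) = N.w (u, v))
    (hw_ml : N'.w (Sum.inr true, Sum.inr false) = 0)
    (S : Set V) (hS : S ⊆ N.leaves) (hSne : S.Nonempty) :
    N'.minWeightTreePD (Sum.inl '' S) = N.minWeightTreePD S := by
  unfold RWDigraph.minWeightTreePD
  congr 1
  ext t
  simp only [Set.mem_setOf_eq]
  constructor
  · rintro ⟨T', hT', rfl⟩
    refine ⟨SubdivAux.backT u v T',
      SubdivAux.back_subtree N u v huv N' hroot harcs S T' hT', ?_⟩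
    conv_lhs => rw [← SubdivAux.fwd_back N u v N' hroot harcs S T' hT']
    exact SubdivAux.fwd_weight N u v huv N' harcs hw_old hw_um hw_mv _
      (SubdivAux.back_subtree N u v huv N' hroot harcs S T' hT').subset
  · rintro ⟨T, hT, rfl⟩
    exact ⟨SubdivAux.fwdT u v T,
      SubdivAux.fwd_subtree N u v huv N' hroot harcs S T hT,
      (SubdivAux.fwd_weight N u v huv N' harcs hw_old hw_um hw_mv T hT.subset).symm⟩
end

section
/- Let N be a rooted weighted digraph with root ρ, leaf set X and non-negative arc weights, let x ∈ X be a leaf whose unique incoming arc is e = (p, x) with weight w(e), and let r ≥ 1. Let N' be the rooted weighted digraph obtained from N by replacing e with a directed path p = m_0 → m_1 → ⋯ → m_r → x in which the final arc (m_r, x) has weight w(e) and all other arcs of the path have weight 0, and adjoining to each vertex m_j (1 ≤ j ≤ r) a new leaf ℓ_j via a new arc (m_j, ℓ_j) of weight 0, so that the leaf set of N' is X' = X ∪ {ℓ_1, …, ℓ_r}. Then the maximum of MinWeightTree-PD_{N'}(S') over all subsets S' ⊆ X' with |S'| = |X| equals MinWeightTree-PD_N(X). -/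
attribute [local instance] Classical.propDecidable

namespace RWDigraph

/-- The arc relation of the digraph `N'` obtained from `N` by replacing the pendant arc
`(p, x)` by the directed path `p → m 0 → m 1 → ⋯ → m (r-1) → x` (where
`m j = Sum.inr (Sum.inl j)` plays the role of `m_{j+1}`), and adjoining to each `m j` a
new leaf `ℓ j = Sum.inr (Sum.inr j)` via a new arc `(m j, ℓ j)`. -/
def subdivArc {V : Type} (N : RWDigraph V) (p x : V) (r : ℕ) :
    (V ⊕ Fin r ⊕ Fin r) → (V ⊕ Fin r ⊕ Fin r) → Prop
  | Sum.inl a, Sum.inl b => (a, b) ∈ N.arcs ∧ ¬(a = p ∧ b = x)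
  | Sum.inl a, Sum.inr (Sum.inl j) => a = p ∧ (j : ℕ) = 0
  | Sum.inr (Sum.inl j), Sum.inl b => b = x ∧ (j : ℕ) = r - 1
  | Sum.inr (Sum.inl j), Sum.inr (Sum.inl j') => (j' : ℕ) = (j : ℕ) + 1
  | Sum.inr (Sum.inl j), Sum.inr (Sum.inr j') => j' = j
  | _, _ => False

/-- The weight function of the digraph `N'` described in `subdivArc`: arcs inherited
from `N` keep their weight, the final arc `(m (r-1), x)` of the subdividing path gets
the weight of the original pendant arc `(p, x)`, and all other new arcs get weight `0`. -/
def subdivW {V : Type} (N : RWDigraph V) (p x : V) (r : ℕ) :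
    (V ⊕ Fin r ⊕ Fin r) × (V ⊕ Fin r ⊕ Fin r) → ℝ
  | (Sum.inl a, Sum.inl b) => N.w (a, b)
  | (Sum.inr (Sum.inl _), Sum.inl _) => N.w (p, x)
  | _ => 0

end RWDigraph

namespace RWDigraph

variable {V : Type}

lemma subtreeWeight_nonneg (N : RWDigraph V) (T : Set (V × V)) : 0 ≤ N.subtreeWeight T :=
  Finset.sum_nonneg fun e _ => N.w_nonneg e

lemma weightSet_bddBelow (N : RWDigraph V) (S : Set V) :
    BddBelow {t : ℝ | ∃ T, N.IsConnectingSubtree T S ∧ t = N.subtreeWeight T} :=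
  ⟨0, by rintro t ⟨T, _, rfl⟩; exact N.subtreeWeight_nonneg T⟩

lemma weightSet_finite (N : RWDigraph V) (S : Set V) :
    {t : ℝ | ∃ T, N.IsConnectingSubtree T S ∧ t = N.subtreeWeight T}.Finite := by
  have h : {t : ℝ | ∃ T, N.IsConnectingSubtree T S ∧ t = N.subtreeWeight T}
      ⊆ N.subtreeWeight '' {T | T ⊆ ↑N.arcs} := by
    rintro t ⟨T, hT, rfl⟩
    exact ⟨T, fun e he => hT.subset e he, rfl⟩
  exact ((N.arcs.finite_toSet.finite_subsets).image _).subset h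

lemma minWeightTreePD_le (N : RWDigraph V) {S : Set V} {T : Set (V × V)}
    (h : N.IsConnectingSubtree T S) : N.minWeightTreePD S ≤ N.subtreeWeight T :=
  csInf_le (N.weightSet_bddBelow S) ⟨T, h, rfl⟩

lemma minWeightTreePD_nonneg (N : RWDigraph V) (S : Set V)
    (hne : ∃ T, N.IsConnectingSubtree T S) : 0 ≤ N.minWeightTreePD S := by
  obtain ⟨T, hT⟩ := hne
  have h := Set.Nonempty.csInf_mem (s := {t : ℝ | ∃ T, N.IsConnectingSubtree T S ∧ t = N.subtreeWeight T})
    ⟨_, T, hT, rfl⟩ (N.weightSet_finite S)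
  obtain ⟨T', _, hT'⟩ := h
  rw [minWeightTreePD, hT']
  exact N.subtreeWeight_nonneg T'

lemma arcWF (N : RWDigraph V) : WellFounded (fun a b => (a, b) ∈ N.arcs) := by
  have hsub : Subrelation (fun a b => (a, b) ∈ N.arcs)
      (InvImage (· < ·) (fun v => (N.verts.filter
        (fun u => Relation.TransGen (fun a b : V => (a, b) ∈ N.arcs) u v)).card)) := by
    intro a b hab
    apply Finset.card_lt_card
    rw [Finset.ssubset_iff_of_subset]
    · refine ⟨a, ?_, ?_⟩
      · simp only [Finset.mem_filter]
        exact ⟨(N.arc_mem _ hab).1, Relation.TransGen.single hab⟩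
      · simp only [Finset.mem_filter, not_and]
        intro _ h
        exact absurd h (N.acyclic a)
    · intro u hu
      simp only [Finset.mem_filter] at hu ⊢
      exact ⟨hu.1, hu.2.tail hab⟩
  exact Subrelation.wf hsub (InvImage.wf _ Nat.lt_wfRel.wf)

lemma exists_connectingSubtree (N : RWDigraph V) (hne : N.leaves.Nonempty) :
    ∃ T : Set (V × V), N.IsConnectingSubtree T N.leaves := by
  by_cases hroot : ∀ u, (N.root, u) ∉ N.arcs
  · -- root is a sink: the only vertex
    have hv : ∀ v ∈ N.verts, v = N.root := by
      intro v hv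
      rcases (N.reach v hv).cases_head with h | ⟨c, hc, _⟩
      · exact h.symm
      · exact absurd hc (hroot c)
    have hrl : N.root ∈ N.leaves := ⟨N.root_mem, fun u h => hroot u h⟩
    refine ⟨∅, ?_, ?_, ?_, ?_, ?_⟩
    · intro e he; exact absurd he (Set.notMem_empty e)
    · intro u u' v h; exact absurd h (Set.notMem_empty _)
    · intro u h; exact Set.notMem_empty _ h
    · intro v hvt
      rcases hvt with rfl | ⟨u, h⟩ | ⟨u, h⟩
      · exact Relation.ReflTransGen.refl
      · exact absurd h (Set.notMem_empty _)
      · exact absurd h (Set.notMem_empty _)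
    · ext v
      simp only [Set.mem_setOf_eq, inTree]
      constructor
      · rintro ⟨rfl | ⟨u, h⟩ | ⟨u, h⟩, -⟩
        · exact hrl
        · exact absurd h (Set.notMem_empty _)
        · exact absurd h (Set.notMem_empty _)
      · intro hvl
        refine ⟨Or.inl (hv v hvl.1), fun u h => Set.notMem_empty _ h⟩
  · push_neg at hroot
    have hrnl : N.root ∉ N.leaves := by
      rintro ⟨-, h⟩
      obtain ⟨u, hu⟩ := hroot
      exact h u hu
    -- choose parents
    have hpar : ∀ v, v ∈ N.verts → v ≠ N.root → ∃ u, (u, v) ∈ N.arcs := by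
      intro v hv hvr
      rcases (N.reach v hv).cases_tail with h | ⟨c, _, hc⟩
      · exact absurd h hvr
      · exact ⟨c, hc⟩
    classical
    set par : V → V := fun v =>
      if h : v ∈ N.verts ∧ v ≠ N.root then (hpar v h.1 h.2).choose else v with hpardef
    have hparspec : ∀ v, v ∈ N.verts → v ≠ N.root → (par v, v) ∈ N.arcs := by
      intro v hv hvr
      simp only [hpardef, dif_pos (And.intro hv hvr)]
      exact (hpar v hv hvr).choose_spec
    set Ts : Set (V × V) := {e | e.2 ∈ N.verts ∧ e.2 ≠ N.root ∧ e.1 = par e.2} with hTs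
    have hTsarc : ∀ e ∈ Ts, e ∈ N.arcs := by
      rintro ⟨a, b⟩ ⟨h1, h2, h3⟩
      have h3' : a = par b := h3
      subst h3'
      exact hparspec b h1 h2
    have reach_span : ∀ v, v ∈ N.verts →
        Relation.ReflTransGen (fun a b => (a, b) ∈ Ts) N.root v := by
      intro v
      induction v using N.arcWF.induction with
      | _ v ih =>
        intro hv
        by_cases hvr : v = N.root
        · subst hvr; exact Relation.ReflTransGen.refl
        · have hp := hparspec v hv hvr
          have hpv : par v ∈ N.verts := (N.arc_mem _ hp).1
          exact (ih (par v) hp hpv).tail ⟨hv, hvr, rfl⟩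
    set T : Set (V × V) :=
      {e | e ∈ Ts ∧ ∃ ℓ ∈ N.leaves,
        Relation.ReflTransGen (fun a b => (a, b) ∈ Ts) e.2 ℓ} with hT
    have path_in_T : ∀ w ℓ, ℓ ∈ N.leaves →
        Relation.ReflTransGen (fun a b => (a, b) ∈ Ts) w ℓ →
        Relation.ReflTransGen (fun a b => (a, b) ∈ T) w ℓ := by
      intro w ℓ hℓ hwl
      induction hwl using Relation.ReflTransGen.head_induction_on with
      | refl => exact Relation.ReflTransGen.refl
      | head h' hp ih =>
        exact Relation.ReflTransGen.head ⟨h', ℓ, hℓ, hp⟩ ih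
    have root_to : ∀ w, Relation.ReflTransGen (fun a b => (a, b) ∈ Ts) N.root w →
        (∃ ℓ ∈ N.leaves, Relation.ReflTransGen (fun a b => (a, b) ∈ Ts) w ℓ) →
        Relation.ReflTransGen (fun a b => (a, b) ∈ T) N.root w := by
      intro w hw
      induction hw with
      | refl => intro _; exact Relation.ReflTransGen.refl
      | tail h1 h2 ih =>
        rintro ⟨ℓ, hℓ, hwl⟩
        exact (ih ⟨ℓ, hℓ, Relation.ReflTransGen.head h2 hwl⟩).tail ⟨h2, ℓ, hℓ, hwl⟩
    refine ⟨T, ?_, ?_, ?_, ?_, ?_⟩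
    · intro e he; exact hTsarc e he.1
    · rintro u u' v ⟨⟨-, -, h3⟩, -⟩ ⟨⟨-, -, h3'⟩, -⟩
      exact (show u = par v from h3).trans (show u' = par v from h3').symm
    · rintro u ⟨⟨-, h2, -⟩, -⟩
      exact h2 rfl
    · intro v hvt
      rcases hvt with rfl | ⟨u, hu⟩ | ⟨u, hu⟩
      · exact Relation.ReflTransGen.refl
      · obtain ⟨huTs, ℓ, hℓ, hreach⟩ := hu
        have hvmem : v ∈ N.verts := (N.arc_mem _ (hTsarc _ huTs)).2
        exact root_to v (reach_span v hvmem) ⟨ℓ, hℓ, hreach⟩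
      · obtain ⟨huTs, ℓ, hℓ, hreach⟩ := hu
        have hvmem : v ∈ N.verts := (N.arc_mem _ (hTsarc _ huTs)).1
        exact root_to v (reach_span v hvmem)
          ⟨ℓ, hℓ, Relation.ReflTransGen.head huTs hreach⟩
    · ext v
      simp only [Set.mem_setOf_eq]
      constructor
      · rintro ⟨hvt, hnout⟩
        rcases hvt with rfl | ⟨u, hu⟩ | ⟨u, hu⟩
        · -- v = root: contradiction, root has an outgoing T-arc
          exfalso
          obtain ⟨ℓ₀, hℓ₀⟩ := hne
          have hℓv : ℓ₀ ∈ N.verts := hℓ₀.1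
          have hrl : Relation.ReflTransGen (fun a b => (a, b) ∈ Ts) N.root ℓ₀ :=
            reach_span ℓ₀ hℓv
          rcases hrl.cases_head with h | ⟨c, hc, hcl⟩
          · rw [← h] at hℓ₀; exact hrnl hℓ₀
          · exact hnout c ⟨hc, ℓ₀, hℓ₀, hcl⟩
        · obtain ⟨-, ℓ, hℓ, hreach⟩ := hu
          rcases hreach.cases_head with h | ⟨c, hc, hcl⟩
          · exact (show v = ℓ from h) ▸ hℓ
          · exact absurd (show (v, c) ∈ T from ⟨hc, ℓ, hℓ, hcl⟩) (hnout c)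
        · exact absurd hu (hnout u)
      · intro hvl
        have hvr : v ≠ N.root := fun h => hrnl (h ▸ hvl)
        have hpv : (par v, v) ∈ T :=
          ⟨⟨hvl.1, hvr, rfl⟩, v, hvl, Relation.ReflTransGen.refl⟩
        refine ⟨Or.inr (Or.inl ⟨par v, hpv⟩), fun u hu => ?_⟩
        exact hvl.2 u (hTsarc _ hu.1)

end RWDigraph
namespace RWDigraph

variable {V : Type}

lemma prune_connectingSubtree (N : RWDigraph V) {T : Set (V × V)} {X S : Set V}
    (hT : N.IsConnectingSubtree T X) (hS : S ⊆ X) (hSne : S.Nonempty) :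
    ∃ T' : Set (V × V), N.IsConnectingSubtree T' S ∧ T' ⊆ T := by
  set T' : Set (V × V) := {e | e ∈ T ∧ ∃ ℓ ∈ S,
    Relation.ReflTransGen (fun a b => (a, b) ∈ T) e.2 ℓ} with hT'def
  have hsinkX : ∀ ℓ ∈ X, inTree T N.root ℓ ∧ ∀ u, (ℓ, u) ∉ T := by
    intro ℓ hℓ
    have : ℓ ∈ {v | inTree T N.root v ∧ ∀ u, (v, u) ∉ T} := hT.sinks ▸ hℓ
    exact this
  have path_in_T' : ∀ w ℓ, ℓ ∈ S →
      Relation.ReflTransGen (fun a b => (a, b) ∈ T) w ℓ →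
      Relation.ReflTransGen (fun a b => (a, b) ∈ T') w ℓ := by
    intro w ℓ hℓ hwl
    induction hwl using Relation.ReflTransGen.head_induction_on with
    | refl => exact Relation.ReflTransGen.refl
    | head h' hp ih => exact Relation.ReflTransGen.head ⟨h', ℓ, hℓ, hp⟩ ih
  have root_to : ∀ w, Relation.ReflTransGen (fun a b => (a, b) ∈ T) N.root w →
      (∃ ℓ ∈ S, Relation.ReflTransGen (fun a b => (a, b) ∈ T) w ℓ) →
      Relation.ReflTransGen (fun a b => (a, b) ∈ T') N.root w := by
    intro w hw
    induction hw with
    | refl => intro _; exact Relation.ReflTransGen.refl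
    | tail h1 h2 ih =>
      rintro ⟨ℓ, hℓ, hwl⟩
      exact (ih ⟨ℓ, hℓ, Relation.ReflTransGen.head h2 hwl⟩).tail ⟨h2, ℓ, hℓ, hwl⟩
  refine ⟨T', ⟨?_, ?_, ?_, ?_, ?_⟩, fun e he => he.1⟩
  · intro e he; exact hT.subset e he.1
  · intro u u' v hu hu'; exact hT.unique_parent u u' v hu.1 hu'.1
  · intro u hu; exact hT.root_no_parent u hu.1
  · intro v hvt
    rcases hvt with rfl | ⟨u, hu⟩ | ⟨u, hu⟩
    · exact Relation.ReflTransGen.refl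
    · obtain ⟨huT, ℓ, hℓ, hreach⟩ := hu
      have : inTree T N.root v := Or.inr (Or.inl ⟨u, huT⟩)
      exact root_to v (hT.reach_root v this) ⟨ℓ, hℓ, hreach⟩
    · obtain ⟨huT, ℓ, hℓ, hreach⟩ := hu
      have : inTree T N.root v := Or.inr (Or.inr ⟨u, huT⟩)
      exact root_to v (hT.reach_root v this)
        ⟨ℓ, hℓ, Relation.ReflTransGen.head huT hreach⟩
  · ext v
    simp only [Set.mem_setOf_eq]
    constructor
    · rintro ⟨hvt, hnout⟩
      rcases hvt with rfl | ⟨u, hu⟩ | ⟨u, hu⟩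
      · -- v = root
        by_cases hrS : N.root ∈ S
        · exact hrS
        · exfalso
          obtain ⟨ℓ₀, hℓ₀⟩ := hSne
          have hit : inTree T N.root ℓ₀ := (hsinkX ℓ₀ (hS hℓ₀)).1
          have hrl := hT.reach_root ℓ₀ hit
          rcases hrl.cases_head with h | ⟨c, hc, hcl⟩
          · exact hrS (h ▸ hℓ₀)
          · exact hnout c ⟨hc, ℓ₀, hℓ₀, hcl⟩
      · obtain ⟨-, ℓ, hℓ, hreach⟩ := hu
        rcases hreach.cases_head with h | ⟨c, hc, hcl⟩
        · exact (show v = ℓ from h) ▸ hℓ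
        · exact absurd (show (v, c) ∈ T' from ⟨hc, ℓ, hℓ, hcl⟩) (hnout c)
      · exact absurd hu (hnout u)
    · intro hvS
      obtain ⟨hit, hnout⟩ := hsinkX v (hS hvS)
      have hvt' : inTree T' N.root v := by
        rcases hit with rfl | ⟨u, hu⟩ | ⟨u, hu⟩
        · exact Or.inl rfl
        · exact Or.inr (Or.inl ⟨u, ⟨hu, v, hvS, Relation.ReflTransGen.refl⟩⟩)
        · exact absurd hu (hnout u)
      exact ⟨hvt', fun u hu => hnout u hu.1⟩

lemma subtreeWeight_mono (N : RWDigraph V) {T T' : Set (V × V)} (h : T' ⊆ T) :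
    N.subtreeWeight T' ≤ N.subtreeWeight T := by
  apply Finset.sum_le_sum_of_subset_of_nonneg
  · intro e he
    simp only [Finset.mem_filter] at he ⊢
    exact ⟨he.1, h he.2⟩
  · intro e _ _; exact N.w_nonneg e

end RWDigraph
namespace RWDigraph

variable {V : Type}

lemma surgery (N : RWDigraph V) (x p : V)
    (hx : x ∈ N.leaves) (hpx : (p, x) ∈ N.arcs)
    (hunique : ∀ q : V, (q, x) ∈ N.arcs → q = p)
    (r : ℕ) (hr : 1 ≤ r)
    (N' : RWDigraph (V ⊕ Fin r ⊕ Fin r))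
    (hroot : N'.root = Sum.inl N.root)
    (harcs : ∀ a b : V ⊕ Fin r ⊕ Fin r, (a, b) ∈ N'.arcs ↔ N.subdivArc p x r a b)
    (hw : ∀ e, N'.w e = N.subdivW p x r e)
    {T : Set (V × V)} {S : Set V} (hT : N.IsConnectingSubtree T S)
    (hxS : x ∈ S)
    (J : Set (Fin r)) (keepx : Prop) (hk : keepx ∨ J.Nonempty) :
    ∃ T' : Set ((V ⊕ Fin r ⊕ Fin r) × (V ⊕ Fin r ⊕ Fin r)),
      N'.IsConnectingSubtree T'
        ((Sum.inl '' (if keepx then S else S \ {x})) ∪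
          ((fun j => Sum.inr (Sum.inr j) : Fin r → V ⊕ Fin r ⊕ Fin r) '' J)) ∧
      N'.subtreeWeight T' =
        N.subtreeWeight T - N.w (p, x) + (if keepx then N.w (p, x) else 0) := by
  classical
  -- basic facts
  have hxnoout : ∀ u, (x, u) ∉ N.arcs := hx.2
  have hpxne : p ≠ x := by
    intro h
    subst h
    exact N.acyclic p (Relation.TransGen.single hpx)
  have hxroot : x ≠ N.root := by
    intro h
    have hp : p ∈ N.verts := (N.arc_mem _ hpx).1
    have h1 := N.reach p hp
    have h2 : Relation.TransGen (fun a b => (a, b) ∈ N.arcs) N.root x :=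
      Relation.TransGen.tail' h1 hpx
    rw [h] at h2
    exact N.acyclic _ h2
  have hxsink : inTree T N.root x ∧ ∀ u, (x, u) ∉ T := by
    have : x ∈ {v | inTree T N.root v ∧ ∀ u, (v, u) ∉ T} := hT.sinks ▸ hxS
    exact this
  have hpxT : (p, x) ∈ T := by
    rcases hxsink.1 with h | ⟨u, hu⟩ | ⟨u, hu⟩
    · exact absurd h hxroot
    · have := hunique u (hT.subset _ hu)
      subst this
      exact hu
    · exact absurd hu (hxsink.2 u)
  -- choose the deepest needed path vertex
  obtain ⟨jM, hjM1, hjM2⟩ : ∃ jM : Fin r, (keepx → (jM : ℕ) = r - 1) ∧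
      (¬keepx → jM ∈ J ∧ ∀ j ∈ J, (j : ℕ) ≤ (jM : ℕ)) := by
    by_cases hkx : keepx
    · exact ⟨⟨r - 1, by omega⟩, fun _ => rfl, fun h => absurd hkx h⟩
    · obtain ⟨j0, hj0⟩ := hk.resolve_left hkx
      obtain ⟨jm, hjm, hjmax⟩ := Set.Finite.exists_maximalFor
        (fun j : Fin r => (j : ℕ)) J (Set.toFinite J) ⟨j0, hj0⟩
      refine ⟨jm, fun h => absurd h hkx, fun _ => ⟨hjm, fun j hj => ?_⟩⟩
      by_contra hlt
      push_neg at hlt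
      exact absurd (hjmax hj (le_of_lt hlt)) (show ¬ ((j : ℕ) ≤ (jm : ℕ)) by omega)
  set M : ℕ := (jM : ℕ) with hMdef
  have hM3 : M ≤ r - 1 := by have := jM.isLt; omega
  have hM2 : ∀ j : Fin r, j ∈ J → (j : ℕ) ≤ M := by
    intro j hj
    by_cases hkx : keepx
    · have := hjM1 hkx; have := j.isLt; omega
    · exact (hjM2 hkx).2 j hj
  -- the new tree
  set T' : Set ((V ⊕ Fin r ⊕ Fin r) × (V ⊕ Fin r ⊕ Fin r)) := fun e =>
    match e with
    | (Sum.inl a, Sum.inl b) => (a, b) ∈ T ∧ ¬(a = p ∧ b = x)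
    | (Sum.inl a, Sum.inr (Sum.inl j)) => a = p ∧ (j : ℕ) = 0
    | (Sum.inr (Sum.inl j), Sum.inl b) => b = x ∧ keepx ∧ (j : ℕ) = r - 1
    | (Sum.inr (Sum.inl j), Sum.inr (Sum.inl j')) => (j' : ℕ) = (j : ℕ) + 1 ∧ (j' : ℕ) ≤ M
    | (Sum.inr (Sum.inl j), Sum.inr (Sum.inr j')) => j' = j ∧ j ∈ J
    | _ => False
    with hT'def
  -- reachability claims
  have C1 : ∀ v, Relation.ReflTransGen (fun a b => (a, b) ∈ T) N.root v → v ≠ x →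
      Relation.ReflTransGen (fun a b => (a, b) ∈ T') (Sum.inl N.root) (Sum.inl v) := by
    intro v hv
    induction hv with
    | refl => intro _; exact Relation.ReflTransGen.refl
    | @tail b c h1 h2 ih =>
      intro hne
      have hbx : b ≠ x := fun h => hxnoout c (hT.subset _ (h ▸ h2))
      exact (ih hbx).tail (show (b, c) ∈ T ∧ ¬(b = p ∧ c = x) from ⟨h2, fun hc => hne hc.2⟩)
  have hpT : inTree T N.root p := Or.inr (Or.inr ⟨x, hpxT⟩)
  have C2 : Relation.ReflTransGen (fun a b => (a, b) ∈ T') (Sum.inl N.root) (Sum.inl p) :=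
    C1 p (hT.reach_root p hpT) hpxne
  have C3 : ∀ n : ℕ, n ≤ M → ∀ j : Fin r, (j : ℕ) = n →
      Relation.ReflTransGen (fun a b => (a, b) ∈ T')
        (Sum.inl N.root) (Sum.inr (Sum.inl j)) := by
    intro n
    induction n with
    | zero => intro _ j hj; exact C2.tail (show p = p ∧ (j : ℕ) = 0 from ⟨rfl, hj⟩)
    | succ k ih =>
      intro hkM j hj
      have hk' : k < r := by omega
      exact (ih (by omega) ⟨k, hk'⟩ rfl).tail
        (show (j : ℕ) = k + 1 ∧ (j : ℕ) ≤ M from ⟨hj, by omega⟩)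
  refine ⟨T', ⟨?_, ?_, ?_, ?_, ?_⟩, ?_⟩
  · -- subset
    rintro ⟨(a | j | j), (b | j' | j')⟩ h
    · exact (harcs _ _).2 ⟨hT.subset _ h.1, h.2⟩
    · exact (harcs _ _).2 h
    · exact h.elim
    · exact (harcs _ _).2 ⟨h.1, h.2.2⟩
    · exact (harcs _ _).2 h.1
    · exact (harcs _ _).2 h.1
    · exact h.elim
    · exact h.elim
    · exact h.elim
  · -- unique parent
    rintro u u' v h h'
    rcases v with b | jv | jv
    · rcases u with a | j | j
      · rcases u' with a' | j'' | j''
        · exact congrArg Sum.inl (hT.unique_parent a a' b h.1 h'.1)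
        · exfalso
          exact h.2 ⟨hunique a (hT.subset _ (h'.1 ▸ h.1)), h'.1⟩
        · exact h'.elim
      · rcases u' with a' | j'' | j''
        · exfalso
          exact h'.2 ⟨hunique a' (hT.subset _ (h.1 ▸ h'.1)), h.1⟩
        · refine congrArg (fun t => Sum.inr (Sum.inl t)) (Fin.ext ?_)
          have h1 := h.2.2; have h2 := h'.2.2; omega
        · exact h'.elim
      · exact h.elim
    · rcases u with a | j | j
      · rcases u' with a' | j'' | j''
        · exact congrArg Sum.inl (h.1.trans h'.1.symm)
        · exfalso
          have h1 := h.2; have h2 := h'.1; omega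
        · exact h'.elim
      · rcases u' with a' | j'' | j''
        · exfalso
          have h1 := h.1; have h2 := h'.2; omega
        · refine congrArg (fun t => Sum.inr (Sum.inl t)) (Fin.ext ?_)
          have h1 := h.1; have h2 := h'.1; omega
        · exact h'.elim
      · exact h.elim
    · rcases u with a | j | j
      · exact h.elim
      · rcases u' with a' | j'' | j''
        · exact h'.elim
        · exact congrArg (fun t => Sum.inr (Sum.inl t)) (h.1.symm.trans h'.1)
        · exact h'.elim
      · exact h.elim
  · -- root has no parent
    rw [hroot]
    rintro (a | j | j) h <;> [skip; skip; exact h.elim]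
    · exact hT.root_no_parent a h.1
    · exact hxroot h.1.symm
  · -- reach_root
    intro v hv
    rw [hroot] at hv ⊢
    rcases v with b | jv | jv
    · rcases hv with h | ⟨u, hu⟩ | ⟨u, hu⟩
      · rw [h]
      · rcases u with a | j | j
        · by_cases hbx : b = x
          · exfalso
            exact hu.2 ⟨hunique a (hT.subset _ (hbx ▸ hu.1)), hbx⟩
          · exact C1 b (hT.reach_root b (Or.inr (Or.inl ⟨a, hu.1⟩))) hbx
        · rw [hu.1]
          exact (C3 M le_rfl jM rfl).tail
            (show x = x ∧ keepx ∧ (jM : ℕ) = r - 1 from ⟨rfl, hu.2.1, hjM1 hu.2.1⟩)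
        · exact hu.elim
      · rcases u with a | j | j
        · have hbx : b ≠ x := fun hc => hxnoout a (hT.subset _ (hc ▸ hu.1))
          exact C1 b (hT.reach_root b (Or.inr (Or.inr ⟨a, hu.1⟩))) hbx
        · rw [hu.1]
          exact C2
        · exact hu.elim
    · rcases hv with h | ⟨u, hu⟩ | ⟨u, hu⟩
      · exact absurd h (by simp)
      · rcases u with a | j | j
        · exact C3 jv (by have := hu.2; omega) jv rfl
        · exact C3 jv (by have := hu.2; omega) jv rfl
        · exact hu.elim
      · rcases u with b | j | j
        · exact C3 jv (by have h1 := hu.2.2; have h2 := hjM1 hu.2.1; omega) jv rfl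
        · exact C3 jv (by have h1 := hu.1; have h2 := hu.2; omega) jv rfl
        · exact C3 jv (hM2 jv hu.2) jv rfl
    · rcases hv with h | ⟨u, hu⟩ | ⟨u, hu⟩
      · exact absurd h (by simp)
      · rcases u with a | j | j
        · exact hu.elim
        · rw [hu.1]
          exact (C3 j (hM2 j hu.2) j rfl).tail
            (show j = j ∧ j ∈ J from ⟨rfl, hu.2⟩)
        · exact hu.elim
      · rcases u with a | j | j <;> exact hu.elim
  · -- sinks
    rw [hroot]
    ext v
    simp only [Set.mem_setOf_eq]
    constructor
    · rintro ⟨hvt, hnout⟩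
      rcases v with b | jv | jv
      · -- an original vertex
        have hbp : b ≠ p := by
          intro hc
          exact hnout (Sum.inr (Sum.inl ⟨0, by omega⟩))
            (show b = p ∧ ((⟨0, by omega⟩ : Fin r) : ℕ) = 0 from ⟨hc, rfl⟩)
        have hbnoout : ∀ u, (b, u) ∉ T := by
          intro u hu
          exact hnout (Sum.inl u)
            (show (b, u) ∈ T ∧ ¬(b = p ∧ u = x) from ⟨hu, fun hc => hbp hc.1⟩)
        have hbS : inTree T N.root b → b ∈ S := by
          intro hit
          have : b ∈ {v | inTree T N.root v ∧ ∀ u, (v, u) ∉ T} := ⟨hit, hbnoout⟩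
          exact hT.sinks ▸ this
        rcases hvt with h | ⟨u, hu⟩ | ⟨u, hu⟩
        · -- b = root
          have hb : b = N.root := by injection h
          have hbS' := hbS (Or.inl hb)
          have hbx : b ≠ x := fun hc => hxroot (hc ▸ hb)
          left
          by_cases hkx : keepx
          · rw [if_pos hkx]; exact ⟨b, hbS', rfl⟩
          · rw [if_neg hkx]; exact ⟨b, ⟨hbS', hbx⟩, rfl⟩
        · rcases u with a | j | j
          · have hbx : b ≠ x := by
              intro hc
              exact hu.2 ⟨hunique a (hT.subset _ (hc ▸ hu.1)), hc⟩
            have hbS' := hbS (Or.inr (Or.inl ⟨a, hu.1⟩))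
            left
            by_cases hkx : keepx
            · rw [if_pos hkx]; exact ⟨b, hbS', rfl⟩
            · rw [if_neg hkx]; exact ⟨b, ⟨hbS', hbx⟩, rfl⟩
          · left
            rw [if_pos hu.2.1]
            exact ⟨x, hxS, (congrArg Sum.inl hu.1).symm⟩
          · exact hu.elim
        · exact absurd hu (hnout _)
      · -- a path vertex: never a sink
        exfalso
        have hjvM : (jv : ℕ) ≤ M := by
          rcases hvt with h | ⟨u, hu⟩ | ⟨u, hu⟩
          · exact absurd h (by simp)
          · rcases u with a | j | j
            · have := hu.2; omega
            · have := hu.2; omega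
            · exact hu.elim
          · rcases u with b | j | j
            · have h1 := hu.2.2; have h2 := hjM1 hu.2.1; omega
            · have h1 := hu.1; have h2 := hu.2; omega
            · exact hM2 jv hu.2
        by_cases hlt : (jv : ℕ) < M
        · have hj' : (jv : ℕ) + 1 < r := by omega
          exact hnout (Sum.inr (Sum.inl ⟨(jv : ℕ) + 1, hj'⟩))
            ⟨rfl, show (jv : ℕ) + 1 ≤ M by omega⟩
        · -- jv = M
          have hjvM' : (jv : ℕ) = M := by omega
          by_cases hkx : keepx
          · exact hnout (Sum.inl x)
              (show x = x ∧ keepx ∧ (jv : ℕ) = r - 1 from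
                ⟨rfl, hkx, by rw [hjvM']; exact hjM1 hkx⟩)
          · have hjv : jv = jM := Fin.ext (by omega)
            exact hnout (Sum.inr (Sum.inr jv))
              (show jv = jv ∧ jv ∈ J from ⟨rfl, hjv ▸ (hjM2 hkx).1⟩)
      · -- a new leaf
        rcases hvt with h | ⟨u, hu⟩ | ⟨u, hu⟩
        · exact absurd h (by simp)
        · rcases u with a | j | j
          · exact hu.elim
          · right
            exact ⟨jv, hu.1 ▸ hu.2, rfl⟩
          · exact hu.elim
        · rcases u with a | j | j <;> exact hu.elim
    · rintro (⟨b, hbS, rfl⟩ | ⟨j, hjJ, rfl⟩)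
      · -- original leaf
        have hbS' : b ∈ S := by
          by_cases hkx : keepx
          · rwa [if_pos hkx] at hbS
          · rw [if_neg hkx] at hbS; exact hbS.1
        have hbsink : inTree T N.root b ∧ ∀ u, (b, u) ∉ T := by
          have : b ∈ {v | inTree T N.root v ∧ ∀ u, (v, u) ∉ T} := hT.sinks ▸ hbS'
          exact this
        have hbp : b ≠ p := by
          intro hc
          exact hbsink.2 x (hc ▸ hpxT)
        constructor
        · rcases hbsink.1 with h | ⟨u, hu⟩ | ⟨u, hu⟩
          · exact Or.inl (congrArg Sum.inl h)
          · by_cases hbx : b = x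
            · by_cases hkx : keepx
              · refine Or.inr (Or.inl ⟨Sum.inr (Sum.inl jM), ?_⟩)
                exact show b = x ∧ keepx ∧ (jM : ℕ) = r - 1 from ⟨hbx, hkx, hjM1 hkx⟩
              · exfalso
                rw [if_neg hkx] at hbS
                exact hbS.2 hbx
            · refine Or.inr (Or.inl ⟨Sum.inl u, ?_⟩)
              exact show (u, b) ∈ T ∧ ¬(u = p ∧ b = x) from ⟨hu, fun hc => hbx hc.2⟩
          · exact absurd hu (hbsink.2 u)
        · rintro (c | j | j) hc
          · exact hbsink.2 c hc.1
          · exact hbp hc.1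
          · exact hc.elim
      · -- new leaf ℓ j
        constructor
        · exact Or.inr (Or.inl ⟨Sum.inr (Sum.inl j),
            show j = j ∧ j ∈ J from ⟨rfl, hjJ⟩⟩)
        · rintro (c | j' | j') hc <;> exact hc.elim
  · -- weight
    have hjrM : keepx → (jM : ℕ) = r - 1 := hjM1
    set emb : V × V ↪ (V ⊕ Fin r ⊕ Fin r) × (V ⊕ Fin r ⊕ Fin r) :=
      ⟨fun e => (Sum.inl e.1, Sum.inl e.2), by
        rintro ⟨a, b⟩ ⟨c, d⟩ h
        simp only [Prod.mk.injEq, Sum.inl.injEq] at h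
        exact Prod.ext h.1 h.2⟩ with hembdef
    set G : Finset (V × V) := N.arcs.filter (fun e => e ∈ T) with hGdef
    set F : Finset ((V ⊕ Fin r ⊕ Fin r) × (V ⊕ Fin r ⊕ Fin r)) :=
      N'.arcs.filter (fun e => e ∈ T') with hFdef
    set F₁ : Finset ((V ⊕ Fin r ⊕ Fin r) × (V ⊕ Fin r ⊕ Fin r)) :=
      (G.erase (p, x)).map emb with hF₁def
    have hF₁F : F₁ ⊆ F := by
      intro e he
      simp only [hF₁def, Finset.mem_map, Finset.mem_erase, hGdef, Finset.mem_filter] at he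
      obtain ⟨⟨a, b⟩, ⟨hne, harc, hmem⟩, rfl⟩ := he
      simp only [hFdef, Finset.mem_filter]
      constructor
      · exact (harcs _ _).2 ⟨harc, fun hc => hne (Prod.ext hc.1 hc.2)⟩
      · exact show (a, b) ∈ T ∧ ¬(a = p ∧ b = x) from
          ⟨hmem, fun hc => hne (Prod.ext hc.1 hc.2)⟩
    have hsum1 : ∑ e ∈ F₁, N'.w e = ∑ e ∈ G.erase (p, x), N.w e := by
      rw [hF₁def, Finset.sum_map]
      apply Finset.sum_congr rfl
      intro e _
      rw [hw]
      rfl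
    have hsum2 : ∑ e ∈ F \ F₁, N'.w e = if keepx then N.w (p, x) else 0 := by
      by_cases hkx : keepx
      · rw [if_pos hkx]
        have hjr : (jM : ℕ) = r - 1 := hjrM hkx
        have hermem : (Sum.inr (Sum.inl jM), Sum.inl x) ∈ F \ F₁ := by
          simp only [Finset.mem_sdiff, hFdef, Finset.mem_filter]
          refine ⟨⟨(harcs _ _).2 ⟨rfl, hjr⟩,
            show x = x ∧ keepx ∧ (jM : ℕ) = r - 1 from ⟨rfl, hkx, hjr⟩⟩, ?_⟩
          simp only [hF₁def, Finset.mem_map]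
          rintro ⟨⟨a, b⟩, -, h⟩
          simp only [hembdef, Function.Embedding.coeFn_mk, Prod.mk.injEq] at h
          exact absurd (Prod.mk.inj (h : (Sum.inl a, Sum.inl b) = _)).1 (by simp)
        rw [Finset.sum_eq_single_of_mem _ hermem]
        · rw [hw]; rfl
        · rintro ⟨(a | j | j), (b | j' | j')⟩ hb hne
          · exfalso
            simp only [Finset.mem_sdiff, hFdef, Finset.mem_filter] at hb
            obtain ⟨⟨harc', hT'mem⟩, hnF₁⟩ := hb
            apply hnF₁
            simp only [hF₁def, Finset.mem_map]
            refine ⟨(a, b), ?_, rfl⟩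
            simp only [Finset.mem_erase, hGdef, Finset.mem_filter]
            have h1 : (a, b) ∈ T ∧ ¬(a = p ∧ b = x) := hT'mem
            have h2 : (a, b) ∈ N.arcs ∧ ¬(a = p ∧ b = x) := (harcs _ _).1 harc'
            exact ⟨fun hc => h1.2 ⟨congrArg Prod.fst hc, congrArg Prod.snd hc⟩,
              h2.1, h1.1⟩
          · rw [hw]; rfl
          · rw [hw]; rfl
          · exfalso
            simp only [Finset.mem_sdiff, hFdef, Finset.mem_filter] at hb
            obtain ⟨⟨-, hT'mem⟩, -⟩ := hb
            obtain ⟨rfl, -, hjval⟩ :=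
              show b = x ∧ keepx ∧ (j : ℕ) = r - 1 from hT'mem
            exact hne (by
              have : j = jM := Fin.ext (by omega)
              rw [this])
          · rw [hw]; rfl
          · rw [hw]; rfl
          · rw [hw]; rfl
          · rw [hw]; rfl
          · rw [hw]; rfl
      · rw [if_neg hkx]
        apply Finset.sum_eq_zero
        rintro ⟨(a | j | j), (b | j' | j')⟩ hb
        · exfalso
          simp only [Finset.mem_sdiff, hFdef, Finset.mem_filter] at hb
          obtain ⟨⟨harc', hT'mem⟩, hnF₁⟩ := hb
          apply hnF₁
          simp only [hF₁def, Finset.mem_map]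
          refine ⟨(a, b), ?_, rfl⟩
          simp only [Finset.mem_erase, hGdef, Finset.mem_filter]
          have h1 : (a, b) ∈ T ∧ ¬(a = p ∧ b = x) := hT'mem
          have h2 : (a, b) ∈ N.arcs ∧ ¬(a = p ∧ b = x) := (harcs _ _).1 harc'
          exact ⟨fun hc => h1.2 ⟨congrArg Prod.fst hc, congrArg Prod.snd hc⟩,
            h2.1, h1.1⟩
        · rw [hw]; rfl
        · rw [hw]; rfl
        · exfalso
          simp only [Finset.mem_sdiff, hFdef, Finset.mem_filter] at hb
          obtain ⟨⟨-, hT'mem⟩, -⟩ := hb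
          exact hkx (show b = x ∧ keepx ∧ (j : ℕ) = r - 1 from hT'mem).2.1
        · rw [hw]; rfl
        · rw [hw]; rfl
        · rw [hw]; rfl
        · rw [hw]; rfl
        · rw [hw]; rfl
    have hpxG : (p, x) ∈ G := by
      simp only [hGdef, Finset.mem_filter]
      exact ⟨hpx, hpxT⟩
    have herase : ∑ e ∈ G.erase (p, x), N.w e = N.subtreeWeight T - N.w (p, x) := by
      have := Finset.add_sum_erase G N.w hpxG
      have hGw : ∑ e ∈ G, N.w e = N.subtreeWeight T := rfl
      linarith
    calc N'.subtreeWeight T' = ∑ e ∈ F, N'.w e := rfl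
      _ = ∑ e ∈ F \ F₁, N'.w e + ∑ e ∈ F₁, N'.w e := (Finset.sum_sdiff hF₁F).symm
      _ = N.subtreeWeight T - N.w (p, x) + (if keepx then N.w (p, x) else 0) := by
          rw [hsum1, hsum2, herase]; ring

end RWDigraph
namespace RWDigraph

variable {V : Type}

lemma unsurgery (N : RWDigraph V) (x p : V)
    (hx : x ∈ N.leaves) (hpx : (p, x) ∈ N.arcs)
    (hunique : ∀ q : V, (q, x) ∈ N.arcs → q = p)
    (r : ℕ) (hr : 1 ≤ r)
    (N' : RWDigraph (V ⊕ Fin r ⊕ Fin r))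
    (hroot : N'.root = Sum.inl N.root)
    (harcs : ∀ a b : V ⊕ Fin r ⊕ Fin r, (a, b) ∈ N'.arcs ↔ N.subdivArc p x r a b)
    (hw : ∀ e, N'.w e = N.subdivW p x r e)
    {T' : Set ((V ⊕ Fin r ⊕ Fin r) × (V ⊕ Fin r ⊕ Fin r))}
    (hT' : N'.IsConnectingSubtree T' (Sum.inl '' N.leaves)) :
    ∃ T : Set (V × V), N.IsConnectingSubtree T N.leaves ∧
      N.subtreeWeight T = N'.subtreeWeight T' := by
  classical
  have hxnoout : ∀ u, (x, u) ∉ N.arcs := hx.2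
  have hpxne : p ≠ x := by
    intro h
    subst h
    exact N.acyclic p (Relation.TransGen.single hpx)
  have hxroot : x ≠ N.root := by
    intro h
    have hp : p ∈ N.verts := (N.arc_mem _ hpx).1
    have h2 : Relation.TransGen (fun a b => (a, b) ∈ N.arcs) N.root x :=
      Relation.TransGen.tail' (N.reach p hp) hpx
    rw [h] at h2
    exact N.acyclic _ h2
  -- no arc out of a new leaf
  have hellnoout : ∀ (j : Fin r) c, (Sum.inr (Sum.inr j), c) ∉ T' := by
    intro j c hc
    have := (harcs _ _).1 (hT'.subset _ hc)
    rcases c with b | j' | j' <;> exact this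
  -- no ℓ-arc is in T'
  have hnoell : ∀ (j j' : Fin r), (Sum.inr (Sum.inl j), Sum.inr (Sum.inr j')) ∉ T' := by
    intro j j' hmem
    have hsink : Sum.inr (Sum.inr j') ∈ {v | inTree T' N'.root v ∧ ∀ u, (v, u) ∉ T'} :=
      ⟨Or.inr (Or.inl ⟨_, hmem⟩), fun u hu => hellnoout j' u hu⟩
    rw [hT'.sinks] at hsink
    obtain ⟨b, -, hb⟩ := hsink
    exact absurd hb (by simp)
  -- x has a parent on the path
  have hxparent : ∃ j : Fin r, (j : ℕ) = r - 1 ∧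
      (Sum.inr (Sum.inl j), Sum.inl x) ∈ T' := by
    have hxsink : Sum.inl x ∈ {v | inTree T' N'.root v ∧ ∀ u, (v, u) ∉ T'} := by
      rw [hT'.sinks]
      exact ⟨x, hx, rfl⟩
    obtain ⟨hit, hnout⟩ := hxsink
    rcases hit with h | ⟨u, hu⟩ | ⟨u, hu⟩
    · exfalso
      rw [hroot] at h
      exact hxroot (by injection h)
    · rcases u with a | j | j
      · exfalso
        have := (harcs _ _).1 (hT'.subset _ hu)
        exact this.2 ⟨hunique a this.1, rfl⟩
      · have := (harcs _ _).1 (hT'.subset _ hu)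
        exact ⟨j, this.2, hu⟩
      · exact absurd hu (hellnoout j _)
    · exact absurd hu (hnout u)
  -- the first path arc is in T'
  have hpm0 : ∃ j0 : Fin r, (j0 : ℕ) = 0 ∧ (Sum.inl p, Sum.inr (Sum.inl j0)) ∈ T' := by
    have claim : ∀ n : ℕ, ∀ j : Fin r, (j : ℕ) = n → inTree T' N'.root (Sum.inr (Sum.inl j)) →
        ∃ j0 : Fin r, (j0 : ℕ) = 0 ∧ (Sum.inl p, Sum.inr (Sum.inl j0)) ∈ T' := by
      intro n
      induction n using Nat.strong_induction_on with
      | _ n ih =>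
        intro j hj hit
        have hreach := hT'.reach_root _ hit
        have hne : Sum.inr (Sum.inl j) ≠ N'.root := by
          rw [hroot]; simp
        rcases hreach.cases_tail with h | ⟨c, -, hc⟩
        · exact absurd h hne
        · rcases c with a | j' | j'
          · have := (harcs _ _).1 (hT'.subset _ hc)
            refine ⟨j, this.2, ?_⟩
            rw [← this.1]
            exact hc
          · have harc : (j : ℕ) = (j' : ℕ) + 1 := (harcs _ _).1 (hT'.subset _ hc)
            have hj' : (j' : ℕ) < n := by omega
            exact ih _ hj' j' rfl (Or.inr (Or.inr ⟨_, hc⟩))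
          · exact absurd hc (hellnoout j' _)
    obtain ⟨jx, hjx, hjxmem⟩ := hxparent
    exact claim _ jx rfl (Or.inr (Or.inr ⟨_, hjxmem⟩))
  -- the projected tree
  set T : Set (V × V) := fun e =>
    (Sum.inl e.1, Sum.inl e.2) ∈ T' ∨ e = (p, x) with hTdef
  have hpxT : (p, x) ∈ T := Or.inr rfl
  -- conversion of reachability
  have Conv : ∀ b s, Relation.ReflTransGen (fun a c => (a, c) ∈ T') s (Sum.inl b) →
      (∀ a, s = Sum.inl a → Relation.ReflTransGen (fun a c => (a, c) ∈ T) a b) ∧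
      (∀ j : Fin r, s = Sum.inr (Sum.inl j) →
        Relation.ReflTransGen (fun a c => (a, c) ∈ T) x b) := by
    intro b s hs
    induction hs using Relation.ReflTransGen.head_induction_on with
    | refl =>
      constructor
      · rintro a ha
        injection ha with h
        rw [h]
      · rintro j hj
        exact absurd hj (by simp)
    | @head s c h' hrest ih =>
      constructor
      · rintro a rfl
        rcases c with b' | j | j
        · exact Relation.ReflTransGen.head (Or.inl h') (ih.1 b' rfl)
        · have harc := (harcs _ _).1 (hT'.subset _ h')
          rw [harc.1]
          exact Relation.ReflTransGen.head hpxT (ih.2 j rfl)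
        · exact absurd ((harcs _ _).1 (hT'.subset _ h')) id
      · rintro j rfl
        rcases c with b' | j' | j'
        · have harc := (harcs _ _).1 (hT'.subset _ h')
          have := ih.1 b' rfl
          rw [harc.1] at this
          exact this
        · exact ih.2 j' rfl
        · exact absurd h' (hnoell j j')
  have Conv' : ∀ b, Relation.ReflTransGen (fun a c => (a, c) ∈ T') (Sum.inl N.root) (Sum.inl b) →
      Relation.ReflTransGen (fun a c => (a, c) ∈ T) N.root b := by
    intro b hb
    exact (Conv b _ hb).1 N.root rfl
  have reachinl : ∀ b, inTree T' N'.root (Sum.inl b) →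
      Relation.ReflTransGen (fun a c => (a, c) ∈ T) N.root b := by
    intro b hb
    have := hT'.reach_root _ hb
    rw [hroot] at this
    exact Conv' b this
  have hxreach : Relation.ReflTransGen (fun a c => (a, c) ∈ T) N.root x := by
    obtain ⟨jx, -, hjxmem⟩ := hxparent
    exact reachinl x (Or.inr (Or.inl ⟨_, hjxmem⟩))
  refine ⟨T, ⟨?_, ?_, ?_, ?_, ?_⟩, ?_⟩
  · -- subset
    rintro ⟨a, b⟩ (h | h)
    · exact ((harcs _ _).1 (hT'.subset _ h)).1
    · rw [h]; exact hpx
  · -- unique parent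
    have key : ∀ u v, (Sum.inl u, Sum.inl v) ∈ T' → v ≠ x := by
      intro u v hu hc
      subst hc
      have := (harcs _ _).1 (hT'.subset _ hu)
      exact this.2 ⟨hunique u this.1, rfl⟩
    rintro u u' v (h | h) (h' | h')
    · have := hT'.unique_parent _ _ _ h h'
      injection this
    · exfalso
      have hvx : v = x := congrArg Prod.snd h'
      exact key u v h hvx
    · exfalso
      have hvx : v = x := congrArg Prod.snd h
      exact key u' v h' hvx
    · have h1 : u = p := congrArg Prod.fst h
      have h2 : u' = p := congrArg Prod.fst h'
      rw [h1, h2]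
  · -- root no parent
    rintro u (h | h)
    · have := hT'.root_no_parent (Sum.inl u)
      rw [hroot] at this
      exact this h
    · exact hxroot (congrArg Prod.snd h).symm
  · -- reach root
    intro v hv
    rcases hv with rfl | ⟨u, hu⟩ | ⟨u, hu⟩
    · exact Relation.ReflTransGen.refl
    · rcases hu with h | h
      · exact reachinl v (Or.inr (Or.inl ⟨_, h⟩))
      · have hvx : v = x := congrArg Prod.snd h
        rw [hvx]
        exact hxreach
    · rcases hu with h | h
      · exact reachinl v (Or.inr (Or.inr ⟨_, h⟩))
      · have hvp : v = p := congrArg Prod.fst h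
        obtain ⟨j0, -, hj0mem⟩ := hpm0
        rw [hvp]
        exact reachinl p (Or.inr (Or.inr ⟨_, hj0mem⟩))
  · -- sinks
    ext v
    simp only [Set.mem_setOf_eq]
    constructor
    · rintro ⟨hit, hnout⟩
      have hvnoT'out : ∀ c, (Sum.inl v, c) ∉ T' := by
        rintro (c | j | j) hc
        · exact hnout c (Or.inl hc)
        · have := (harcs _ _).1 (hT'.subset _ hc)
          exact hnout x (Or.inr (by rw [this.1]))
        · exact (harcs _ _).1 (hT'.subset _ hc)
      have hsinkT' : inTree T' N'.root (Sum.inl v) → v ∈ N.leaves := by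
        intro hit'
        have : Sum.inl v ∈ {u | inTree T' N'.root u ∧ ∀ c, (u, c) ∉ T'} :=
          ⟨hit', hvnoT'out⟩
        rw [hT'.sinks] at this
        obtain ⟨b, hb, hbe⟩ := this
        have : b = v := by injection hbe
        rwa [← this]
      rcases hit with rfl | ⟨u, hu⟩ | ⟨u, hu⟩
      · exact hsinkT' (Or.inl hroot.symm)
      · rcases hu with h | h
        · exact hsinkT' (Or.inr (Or.inl ⟨_, h⟩))
        · have hvx : v = x := congrArg Prod.snd h
          rw [hvx]; exact hx
      · exact absurd hu (hnout u)
    · intro hv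
      have hsink : Sum.inl v ∈ {u | inTree T' N'.root u ∧ ∀ c, (u, c) ∉ T'} := by
        rw [hT'.sinks]
        exact ⟨v, hv, rfl⟩
      obtain ⟨hit', hnout'⟩ := hsink
      constructor
      · rcases hit' with h | ⟨u, hu⟩ | ⟨u, hu⟩
        · rw [hroot] at h
          exact Or.inl (by injection h)
        · rcases u with a | j | j
          · exact Or.inr (Or.inl ⟨a, Or.inl hu⟩)
          · have := (harcs _ _).1 (hT'.subset _ hu)
            refine Or.inr (Or.inl ⟨p, Or.inr ?_⟩)
            rw [this.1]
          · exact absurd hu (hellnoout j _)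
        · exact absurd hu (hnout' u)
      · rintro c (h | h)
        · exact hnout' (Sum.inl c) h
        · have hvp : v = p := congrArg Prod.fst h
          obtain ⟨j0, -, hj0mem⟩ := hpm0
          rw [hvp] at hnout'
          exact hnout' _ hj0mem
  · -- weight
    obtain ⟨jx, hjxval, hjxmem⟩ := hxparent
    set emb : V × V ↪ (V ⊕ Fin r ⊕ Fin r) × (V ⊕ Fin r ⊕ Fin r) :=
      ⟨fun e => (Sum.inl e.1, Sum.inl e.2), by
        rintro ⟨a, b⟩ ⟨c, d⟩ h
        simp only [Prod.mk.injEq, Sum.inl.injEq] at h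
        exact Prod.ext h.1 h.2⟩ with hembdef
    set G : Finset (V × V) := N.arcs.filter (fun e => e ∈ T) with hGdef
    set F : Finset ((V ⊕ Fin r ⊕ Fin r) × (V ⊕ Fin r ⊕ Fin r)) :=
      N'.arcs.filter (fun e => e ∈ T') with hFdef
    set F₁ : Finset ((V ⊕ Fin r ⊕ Fin r) × (V ⊕ Fin r ⊕ Fin r)) :=
      (G.erase (p, x)).map emb with hF₁def
    have hmemT : ∀ a b : V, (Sum.inl a, Sum.inl b) ∈ T' → ((a, b) ∈ N.arcs ∧ (a, b) ≠ (p, x)) := by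
      intro a b h
      have := (harcs _ _).1 (hT'.subset _ h)
      exact ⟨this.1, fun hc => this.2 ⟨congrArg Prod.fst hc, congrArg Prod.snd hc⟩⟩
    have hF₁F : F₁ ⊆ F := by
      intro e he
      simp only [hF₁def, Finset.mem_map, Finset.mem_erase, hGdef, Finset.mem_filter] at he
      obtain ⟨⟨a, b⟩, ⟨hne, harc, hmem⟩, rfl⟩ := he
      have hT'mem : (Sum.inl a, Sum.inl b) ∈ T' := by
        rcases hmem with h | h
        · exact h
        · exact absurd h hne
      simp only [hFdef, Finset.mem_filter]
      exact ⟨hT'.subset _ hT'mem, hT'mem⟩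
    have hsum1 : ∑ e ∈ F₁, N'.w e = ∑ e ∈ G.erase (p, x), N.w e := by
      rw [hF₁def, Finset.sum_map]
      apply Finset.sum_congr rfl
      intro e _
      rw [hw]
      rfl
    have hsum2 : ∑ e ∈ F \ F₁, N'.w e = N.w (p, x) := by
      have hermem : (Sum.inr (Sum.inl jx), Sum.inl x) ∈ F \ F₁ := by
        simp only [Finset.mem_sdiff, hFdef, Finset.mem_filter]
        refine ⟨⟨hT'.subset _ hjxmem, hjxmem⟩, ?_⟩
        simp only [hF₁def, Finset.mem_map]
        rintro ⟨⟨a, b⟩, -, h⟩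
        simp only [hembdef, Function.Embedding.coeFn_mk, Prod.mk.injEq] at h
        exact absurd (Prod.mk.inj (h : (Sum.inl a, Sum.inl b) = _)).1 (by simp)
      rw [Finset.sum_eq_single_of_mem _ hermem]
      · rw [hw]; rfl
      · rintro ⟨(a | j | j), (b | j' | j')⟩ hb hne
        · exfalso
          simp only [Finset.mem_sdiff, hFdef, Finset.mem_filter] at hb
          obtain ⟨⟨-, hT'mem⟩, hnF₁⟩ := hb
          apply hnF₁
          simp only [hF₁def, Finset.mem_map]
          refine ⟨(a, b), ?_, rfl⟩
          simp only [Finset.mem_erase, hGdef, Finset.mem_filter]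
          obtain ⟨h1, h2⟩ := hmemT a b hT'mem
          exact ⟨h2, h1, Or.inl hT'mem⟩
        · rw [hw]; rfl
        · rw [hw]; rfl
        · exfalso
          simp only [Finset.mem_sdiff, hFdef, Finset.mem_filter] at hb
          obtain ⟨⟨-, hT'mem⟩, -⟩ := hb
          have h2 := (harcs _ _).1 (hT'.subset _ hT'mem)
          have hbx : b = x := h2.1
          rw [hbx] at hT'mem
          have huniq := hT'.unique_parent _ _ _ hT'mem hjxmem
          apply hne
          rw [hbx, huniq]
        · rw [hw]; rfl
        · rw [hw]; rfl
        · rw [hw]; rfl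
        · rw [hw]; rfl
        · rw [hw]; rfl
    have hpxG : (p, x) ∈ G := by
      simp only [hGdef, Finset.mem_filter]
      exact ⟨hpx, hpxT⟩
    have h1 := Finset.add_sum_erase G N.w hpxG
    have h2 := Finset.sum_sdiff (f := N'.w) hF₁F
    have hGw : N.subtreeWeight T = ∑ e ∈ G, N.w e := rfl
    have hFw : N'.subtreeWeight T' = ∑ e ∈ F, N'.w e := rfl
    rw [hGw, hFw, ← h1, ← h2, hsum1, hsum2]

end RWDigraph
/-- let `x` be a leaf of `N` whose unique incoming arc is `(p, x)`, and
let `N'` (on vertex set `V ⊕ Fin r ⊕ Fin r`, `r ≥ 1`) be obtained from `N` by replacing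
`(p, x)` by a path `p → m 0 → ⋯ → m (r-1) → x` whose final arc carries the weight of
`(p, x)` and whose other arcs have weight `0`, adjoining to each `m j` a new leaf `ℓ j`
via an arc of weight `0`. Then the maximum of `MinWeightTree-PD_{N'}(S')` over all
subsets `S'` of the leaf set of `N'` with `|S'| = |X|` equals `MinWeightTree-PD_N(X)`. -/
theorem max_minWeightTreePD_subdivided {V : Type} (N : RWDigraph V) (x p : V)
    (hx : x ∈ N.leaves) (hpx : (p, x) ∈ N.arcs)
    (hunique : ∀ q : V, (q, x) ∈ N.arcs → q = p)
    (r : ℕ) (hr : 1 ≤ r)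
    (N' : RWDigraph (V ⊕ Fin r ⊕ Fin r))
    (hroot : N'.root = Sum.inl N.root)
    (hverts : ∀ a : V ⊕ Fin r ⊕ Fin r, a ∈ N'.verts ↔
      ((∃ b ∈ N.verts, a = Sum.inl b) ∨ (∃ j : Fin r, a = Sum.inr (Sum.inl j)) ∨
        (∃ j : Fin r, a = Sum.inr (Sum.inr j))))
    (harcs : ∀ a b : V ⊕ Fin r ⊕ Fin r, (a, b) ∈ N'.arcs ↔ N.subdivArc p x r a b)
    (hw : ∀ e, N'.w e = N.subdivW p x r e) :
    IsGreatest {t : ℝ | ∃ S' : Set (V ⊕ Fin r ⊕ Fin r), S' ⊆ N'.leaves ∧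
        S'.ncard = N.leaves.ncard ∧ t = N'.minWeightTreePD S'}
      (N.minWeightTreePD N.leaves) := by
  classical
  open RWDigraph in
  have hXfin : N.leaves.Finite :=
    Set.Finite.subset N.verts.finite_toSet (fun v hv => hv.1)
  have hXne : N.leaves.Nonempty := ⟨x, hx⟩
  -- leaf characterizations in N'
  have hleafa : ∀ v ∈ N.leaves, Sum.inl v ∈ N'.leaves := by
    intro v hv
    refine ⟨(hverts _).2 (Or.inl ⟨v, hv.1, rfl⟩), ?_⟩
    rintro (b | j | j) hb
    · exact hv.2 b (((harcs _ _).1 hb).1)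
    · have h2 : v = p ∧ (j : ℕ) = 0 := (harcs _ _).1 hb
      exact hv.2 x (h2.1 ▸ hpx)
    · exact (harcs _ _).1 hb
  have hleafb : ∀ v, Sum.inl v ∈ N'.leaves → v ∈ N.leaves := by
    intro v hv
    constructor
    · rcases (hverts _).1 hv.1 with ⟨b, hb, heq⟩ | ⟨j, heq⟩ | ⟨j, heq⟩
      · have : v = b := by injection heq
        rwa [this]
      · exact absurd heq (by simp)
      · exact absurd heq (by simp)
    · intro u hu
      by_cases hne : (v, u) = (p, x)
      · have hvp : v = p := congrArg Prod.fst hne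
        exact hv.2 (Sum.inr (Sum.inl ⟨0, by omega⟩))
          ((harcs _ _).2 (show v = p ∧ ((⟨0, by omega⟩ : Fin r) : ℕ) = 0 from ⟨hvp, rfl⟩))
      · exact hv.2 (Sum.inl u) ((harcs _ _).2
          (show (v, u) ∈ N.arcs ∧ ¬(v = p ∧ u = x) from
            ⟨hu, fun hc => hne (Prod.ext hc.1 hc.2)⟩))
  have hleafc : ∀ j : Fin r, Sum.inr (Sum.inl j) ∉ N'.leaves := by
    intro j hj
    exact hj.2 (Sum.inr (Sum.inr j)) ((harcs _ _).2 (show j = j from rfl))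
  constructor
  · -- membership: take S' = Sum.inl '' N.leaves
    refine ⟨Sum.inl '' N.leaves, ?_, ?_, ?_⟩
    · rintro s ⟨v, hv, rfl⟩
      exact hleafa v hv
    · exact Set.ncard_image_of_injective _ Sum.inl_injective
    · -- equal weight sets
      have hsets : {t : ℝ | ∃ T, N'.IsConnectingSubtree T (Sum.inl '' N.leaves) ∧
            t = N'.subtreeWeight T}
          = {t : ℝ | ∃ T, N.IsConnectingSubtree T N.leaves ∧ t = N.subtreeWeight T} := by
        ext t
        constructor
        · rintro ⟨T', hT', rfl⟩
          obtain ⟨T, hT, heq⟩ := N.unsurgery x p hx hpx hunique r hr N' hroot harcs hw hT'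
          exact ⟨T, hT, heq.symm⟩
        · rintro ⟨T, hT, rfl⟩
          obtain ⟨T', hT'c, heq⟩ := N.surgery x p hx hpx hunique r hr N' hroot harcs hw
            hT hx (∅ : Set (Fin r)) True (Or.inl trivial)
          rw [if_pos trivial] at hT'c heq
          simp only [Set.image_empty, Set.union_empty] at hT'c
          refine ⟨T', hT'c, ?_⟩
          rw [heq]
          ring
      rw [minWeightTreePD, minWeightTreePD, hsets]
  · -- upper bound
    rintro t ⟨S', hS'sub, hS'card, rfl⟩
    -- a minimum-weight connecting subtree for the full leaf set
    have hA : sInf {t : ℝ | ∃ T, N.IsConnectingSubtree T N.leaves ∧ t = N.subtreeWeight T}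
        ∈ {t : ℝ | ∃ T, N.IsConnectingSubtree T N.leaves ∧ t = N.subtreeWeight T} := by
      obtain ⟨T₀, hT₀⟩ := N.exists_connectingSubtree hXne
      exact Set.Nonempty.csInf_mem ⟨_, T₀, hT₀, rfl⟩ (N.weightSet_finite _)
    obtain ⟨Tm, hTm, hTmw⟩ := hA
    have hminX : N.minWeightTreePD N.leaves = N.subtreeWeight Tm := hTmw
    -- decompose S'
    set S₀ : Set V := {v | Sum.inl v ∈ S'} with hS₀def
    set J : Set (Fin r) := {j | Sum.inr (Sum.inr j) ∈ S'} with hJdef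
    have hS₀X : S₀ ⊆ N.leaves := fun v hv => hleafb v (hS'sub hv)
    have hdecomp : S' = Sum.inl '' S₀ ∪
        ((fun j => Sum.inr (Sum.inr j) : Fin r → V ⊕ Fin r ⊕ Fin r) '' J) := by
      ext s
      constructor
      · intro hs
        rcases s with b | j | j
        · exact Or.inl ⟨b, hs, rfl⟩
        · exact absurd (hS'sub hs) (hleafc j)
        · exact Or.inr ⟨j, hs, rfl⟩
      · rintro (⟨b, hb, rfl⟩ | ⟨j, hj, rfl⟩)
        · exact hb
        · exact hj
    have hkJ : (x ∈ S₀) ∨ J.Nonempty := by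
      by_contra hcon
      push_neg at hcon
      obtain ⟨hxn, hJe⟩ := hcon
      have hJ : J = ∅ := hJe
      have hS' : S' = Sum.inl '' S₀ := by
        rw [hdecomp, hJ]
        simp
      have h1 : S'.ncard = S₀.ncard := by
        rw [hS', Set.ncard_image_of_injective _ Sum.inl_injective]
      have h2 : S₀.ncard < N.leaves.ncard := by
        apply Set.ncard_lt_ncard _ hXfin
        exact ⟨hS₀X, fun hsub => hxn (hsub hx)⟩
      omega
    -- prune the minimum tree to S₀ ∪ {x}
    have hsubX : S₀ ∪ {x} ⊆ N.leaves := by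
      rintro v (hv | hv)
      · exact hS₀X hv
      · rw [hv]; exact hx
    obtain ⟨T₁, hT₁, hT₁sub⟩ := N.prune_connectingSubtree hTm hsubX ⟨x, Or.inr rfl⟩
    -- surgery
    obtain ⟨T', hT'c, hT'w⟩ := N.surgery x p hx hpx hunique r hr N' hroot harcs hw
      hT₁ (Or.inr rfl) J (x ∈ S₀) hkJ
    have hle3 : N.subtreeWeight T₁ ≤ N.subtreeWeight Tm := N.subtreeWeight_mono hT₁sub
    have hwpos := N.w_nonneg (p, x)
    rw [hminX]
    by_cases hxS₀ : x ∈ S₀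
    · rw [if_pos hxS₀] at hT'c hT'w
      have hU : S₀ ∪ {x} = S₀ := Set.union_eq_self_of_subset_right (by simpa using hxS₀)
      rw [hU, ← hdecomp] at hT'c
      have hle1 : N'.minWeightTreePD S' ≤ N'.subtreeWeight T' := N'.minWeightTreePD_le hT'c
      have hle2 : N'.subtreeWeight T' ≤ N.subtreeWeight T₁ := by rw [hT'w]; linarith
      linarith
    · rw [if_neg hxS₀] at hT'c hT'w
      have hU : (S₀ ∪ {x}) \ {x} = S₀ := by
        ext v
        constructor
        · rintro ⟨hv1 | hv1, hv2⟩
          · exact hv1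
          · exact absurd hv1 hv2
        · intro hv
          exact ⟨Or.inl hv, fun hc => hxS₀ (hc ▸ hv)⟩
      rw [hU, ← hdecomp] at hT'c
      have hle1 : N'.minWeightTreePD S' ≤ N'.subtreeWeight T' := N'.minWeightTreePD_le hT'c
      have hle2 : N'.subtreeWeight T' ≤ N.subtreeWeight T₁ := by rw [hT'w]; linarith
      linarith
end
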